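/- Let the setting be type A_N or type B_N. For each (i,k) ∈ X there exists exactly one path in P_{i,k} whose set of upper corners C_{p,+} is empty (the lowest path p⁻_{i,k}); moreover it is the unique path in P_{i,k} containing the point (N+1−i, k+N+1) in type A, the unique path containing ι(i, k+4N−2) in type B when i < N, and the unique path containing (2N−1, k+4N−2+ε) in type B when i = N. -/

import Mathlib

namespace Paper

/-- The ambient setting: type `A N` (with `N ≥ 1`) or type `B N ε`
(with `N ≥ 2` and `0 < ε < 1/2`). -/
inductive Setting where
  | A (N : ℕ)
  | B (N : ℕ) (ε : ℝ)

namespace Setting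

/-- The rank `N`. -/
def N : Setting → ℕ
  | A n => n
  | B n _ => n

/-- Validity of the parameters of the setting. -/
def valid : Setting → Prop
  | A n => 1 ≤ n
  | B n ε => 2 ≤ n ∧ 0 < ε ∧ ε < 1 / 2

end Setting

/-- The numbers `r_i` : in type A all equal `1`; in type B, `r_N = 1` and `r_i = 2` for `i < N`. -/
def rr : Setting → ℕ → ℕ
  | .A _, _ => 1
  | .B n _, j => if j = n then 1 else 2

/-- The set `X` in type `A_N`. -/
def XA (n : ℕ) : Set (ℕ × ℤ) :=
  {ik | 1 ≤ ik.1 ∧ ik.1 ≤ n ∧ ((ik.1 : ℤ) - ik.2) % 2 = 1}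

/-- The set `X` in type `B_N`. -/
def XB (n : ℕ) : Set (ℕ × ℤ) :=
  {ik | (ik.1 = n ∧ ik.2 % 2 = 1) ∨ (1 ≤ ik.1 ∧ ik.1 < n ∧ ik.2 % 2 = 0)}

/-- The set `X ⊆ I × ℤ`. -/
def X : Setting → Set (ℕ × ℤ)
  | .A n => XA n
  | .B n _ => XB n

/-- The set `W = {(i,k) : (i, k - r_i) ∈ X}`. -/
def W (S : Setting) : Set (ℕ × ℤ) :=
  {ik | (ik.1, ik.2 - (rr S ik.1 : ℤ)) ∈ X S}

/-- The `r`-th point of a path (a finite list of points of the plane). -/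
def pt (p : List (ℝ × ℝ)) (r : ℕ) : ℝ × ℝ := p.getD r (0, 0)

/-- The set of paths `𝒫_{i,k}` in type `A_N`. -/
def pathsA (n : ℕ) (i : ℕ) (k : ℤ) : Set (List (ℝ × ℝ)) :=
  {p | p.length = n + 2 ∧
    (∀ r, r < n + 2 → (pt p r).1 = (r : ℝ)) ∧
    (pt p 0).2 = (i : ℝ) + (k : ℝ) ∧
    (pt p (n + 1)).2 = (n : ℝ) + 1 - (i : ℝ) + (k : ℝ) ∧
    (∀ r, r ≤ n → (pt p (r + 1)).2 - (pt p r).2 = 1 ∨ (pt p (r + 1)).2 - (pt p r).2 = -1)}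

/-- The set of paths `𝒫_{N,ℓ}` in type `B_N`. -/
def pathsBspin (n : ℕ) (ε : ℝ) (l : ℤ) : Set (List (ℝ × ℝ)) :=
  {p | p.length = n + 1 ∧
    (if l % 4 = 3 then ∀ r, r < n → (pt p r).1 = 2 * (r : ℝ)
     else ∀ r, r < n → (pt p r).1 = 4 * (n : ℝ) - 2 - 2 * (r : ℝ)) ∧
    (pt p n).1 = 2 * (n : ℝ) - 1 ∧
    (pt p 0).2 = (l : ℝ) + 2 * (n : ℝ) - 1 ∧
    (∀ r, r + 2 ≤ n → (pt p (r + 1)).2 - (pt p r).2 = 2 ∨ (pt p (r + 1)).2 - (pt p r).2 = -2) ∧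
    ((pt p n).2 - (pt p (n - 1)).2 = 1 + ε ∨ (pt p n).2 - (pt p (n - 1)).2 = -(1 + ε))}

/-- The set of paths `𝒫_{i,k}` in type `B_N`. -/
def pathsB (n : ℕ) (ε : ℝ) (i : ℕ) (k : ℤ) : Set (List (ℝ × ℝ)) :=
  if i = n then pathsBspin n ε k
  else {p | ∃ a b : List (ℝ × ℝ),
    a ∈ pathsBspin n ε (k - (2 * (n : ℤ) - 2 * (i : ℤ) - 1)) ∧
    b ∈ pathsBspin n ε (k + (2 * (n : ℤ) - 2 * (i : ℤ) - 1)) ∧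
    p = a ++ b.reverse ∧
    (pt a n).1 = (pt b n).1 ∧ 0 < (pt a n).2 - (pt b n).2}

/-- The set of paths `𝒫_{i,k}`. -/
def P : Setting → ℕ → ℤ → Set (List (ℝ × ℝ))
  | .A n => pathsA n
  | .B n ε => pathsB n ε

/-- The map `ι : X → ℤ × ℤ` of type `B_N`. -/
def iotaB (n : ℕ) (ik : ℕ × ℤ) : ℤ × ℤ :=
  if ik.1 = n then (2 * (n : ℤ) - 1, ik.2)
  else if (2 * (n : ℤ) + ik.2 - 2 * (ik.1 : ℤ)) % 4 = 2 then (2 * (ik.1 : ℤ), ik.2)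
  else (4 * (n : ℤ) - 2 - 2 * (ik.1 : ℤ), ik.2)

/-- The corners of a path: `Cp S p true` is the set `C_{p,+}` of upper corners, and
`Cp S p false` is the set `C_{p,-}` of lower corners. -/
def Cp (S : Setting) (p : List (ℝ × ℝ)) (up : Bool) : Set (ℕ × ℤ) :=
  match S with
  | .A n =>
    {jl | 1 ≤ jl.1 ∧ jl.1 ≤ n ∧
      pt p jl.1 = ((jl.1 : ℝ), (jl.2 : ℝ)) ∧
      (pt p (jl.1 - 1)).2 = (jl.2 : ℝ) + (if up then 1 else -1) ∧
      (pt p (jl.1 + 1)).2 = (jl.2 : ℝ) + (if up then 1 else -1)}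
  | .B n ε =>
    {jl | jl ∈ XB n ∧
      ((∃ r : ℕ, 1 ≤ r ∧ r + 1 < p.length ∧
          pt p r = (((iotaB n jl).1 : ℝ), ((iotaB n jl).2 : ℝ)) ∧
          (iotaB n jl).1 ≠ 0 ∧ (iotaB n jl).1 ≠ 2 * (n : ℤ) - 1 ∧
          (iotaB n jl).1 ≠ 4 * (n : ℤ) - 2 ∧
          (if up then (pt p r).2 < (pt p (r - 1)).2 ∧ (pt p r).2 < (pt p (r + 1)).2
           else (pt p (r - 1)).2 < (pt p r).2 ∧ (pt p (r + 1)).2 < (pt p r).2))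
       ∨ (jl.1 = n ∧
          (if up then (2 * (n : ℝ) - 1, (jl.2 : ℝ) - ε) ∈ p ∧ (2 * (n : ℝ) - 1, (jl.2 : ℝ) + ε) ∉ p
           else (2 * (n : ℝ) - 1, (jl.2 : ℝ) + ε) ∈ p ∧ (2 * (n : ℝ) - 1, (jl.2 : ℝ) - ε) ∉ p)))}

/-- `p'` is obtained from `p` by replacing the point `q` by the point `q'`. -/
def Replace1 (p p' : List (ℝ × ℝ)) (q q' : ℝ × ℝ) : Prop :=
  ∃ r : ℕ, r < p.length ∧ pt p r = q ∧ p'.length = p.length ∧ pt p' r = q' ∧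
    ∀ s, s < p.length → s ≠ r → pt p' s = pt p s

/-- `p'` is obtained from `p` by replacing the point `q1` by `q1'` and the point `q2` by `q2'`. -/
def Replace2 (p p' : List (ℝ × ℝ)) (q1 q1' q2 q2' : ℝ × ℝ) : Prop :=
  ∃ r s : ℕ, r < p.length ∧ s < p.length ∧ r ≠ s ∧ pt p r = q1 ∧ pt p s = q2 ∧
    p'.length = p.length ∧ pt p' r = q1' ∧ pt p' s = q2' ∧
    ∀ u, u < p.length → u ≠ r → u ≠ s → pt p' u = pt p u

/-- The path `p` can be lowered at `(j, l)`: `(j, l - r_j) ∈ C_{p,+}` and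
`(j, l + r_j) ∉ C_{p,+}`. -/
def CanLower (S : Setting) (p : List (ℝ × ℝ)) (j : ℕ) (l : ℤ) : Prop :=
  (j, l - (rr S j : ℤ)) ∈ Cp S p true ∧ (j, l + (rr S j : ℤ)) ∉ Cp S p true

/-- `p'` is the result of the lowering move at `(j,l)` applied to the path `p ∈ 𝒫_{i,k}`;
written `p' = p 𝒜_{j,l}⁻¹`. -/
def LoweredTo (S : Setting) (i : ℕ) (k : ℤ) (j : ℕ) (l : ℤ)
    (p p' : List (ℝ × ℝ)) : Prop :=
  p ∈ P S i k ∧ p' ∈ P S i k ∧ CanLower S p j l ∧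
  (match S with
   | .A _ => Replace1 p p' ((j : ℝ), (l : ℝ) - 1) ((j : ℝ), (l : ℝ) + 1)
   | .B n ε =>
     if j = n then
       Replace1 p p' (2 * (n : ℝ) - 1, (l : ℝ) - 1 - ε) (2 * (n : ℝ) - 1, (l : ℝ) + 1 + ε)
     else if j = n - 1 then
       Replace2 p p'
         (((iotaB n (j, l - 2)).1 : ℝ), (l : ℝ) - 2) (((iotaB n (j, l - 2)).1 : ℝ), (l : ℝ) + 2)
         (2 * (n : ℝ) - 1, (l : ℝ) - 1 + ε) (2 * (n : ℝ) - 1, (l : ℝ) + 1 - ε)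
     else
       Replace1 p p'
         (((iotaB n (j, l - 2)).1 : ℝ), (l : ℝ) - 2) (((iotaB n (j, l - 2)).1 : ℝ), (l : ℝ) + 2))

/-- The path `p` can be raised at `(j,l)`: it is of the form `p' 𝒜_{j,l}⁻¹`. -/
def CanRaise (S : Setting) (i : ℕ) (k : ℤ) (p : List (ℝ × ℝ)) (j : ℕ) (l : ℤ) : Prop :=
  ∃ p', LoweredTo S i k j l p' p

/-- The monomial group `ℳ`, realised as exponent functions: the free abelian group on the
symbols `Y_{i,k}`, `(i,k) ∈ X`, is identified with finitely supported functions `(ℕ × ℤ) → ℤ`,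
written additively. -/
def Y (x : ℕ × ℤ) : (ℕ × ℤ) → ℤ := fun z => if z = x then 1 else 0

noncomputable def ind (s : Prop) : ℤ := @ite ℤ s (Classical.propDecidable s) 1 0

/-- The monomial `m(p)` of a path: `∏ Y_{j,l}` over upper corners times `∏ Y_{j,l}⁻¹`
over lower corners. -/
noncomputable def mon (S : Setting) (p : List (ℝ × ℝ)) : (ℕ × ℤ) → ℤ :=
  fun x => ind (x ∈ Cp S p true) - ind (x ∈ Cp S p false)

/-- The monomials `A_{j,l}`, with the conventions `Y_{0,·} = Y_{N+1,·} = 1`. -/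
def Amon (S : Setting) (j : ℕ) (l : ℤ) : (ℕ × ℤ) → ℤ :=
  match S with
  | .A n =>
      Y (j, l + 1) + Y (j, l - 1) - (if j = 1 then 0 else Y (j - 1, l))
        - (if j = n then 0 else Y (j + 1, l))
  | .B n _ =>
      if j = n then Y (n, l + 1) + Y (n, l - 1) - Y (n - 1, l)
      else if j = n - 1 then
        Y (n - 1, l + 2) + Y (n - 1, l - 2) - (if j = 1 then 0 else Y (n - 2, l))
          - Y (n, l + 1) - Y (n, l - 1)
      else
        Y (j, l + 2) + Y (j, l - 2) - (if j = 1 then 0 else Y (j - 1, l)) - Y (j + 1, l)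

/-- A monomial is dominant iff all its exponents are nonnegative. -/
def Dominant (m : (ℕ × ℤ) → ℤ) : Prop := ∀ x, 0 ≤ m x

/-- A monomial is anti-dominant iff all its exponents are nonpositive. -/
def AntiDominant (m : (ℕ × ℤ) → ℤ) : Prop := ∀ x, m x ≤ 0

/-- `(i',k')` is in snake position with respect to `(i,k)`. -/
def SnakePos : Setting → ℕ × ℤ → ℕ × ℤ → Prop
  | .A _, ik, ik' => |(ik'.1 : ℤ) - (ik.1 : ℤ)| + 2 ≤ ik'.2 - ik.2
  | .B n _, ik, ik' =>
      if ik.1 = n ∧ ik'.1 = n then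
        2 ≤ ik'.2 - ik.2 ∧ (ik'.2 - ik.2) % 4 = 2
      else if ik.1 = n ∨ ik'.1 = n then
        2 * |(ik'.1 : ℤ) - (ik.1 : ℤ)| + 3 ≤ ik'.2 - ik.2 ∧
          (ik'.2 - ik.2) % 4 = (2 * |(ik'.1 : ℤ) - (ik.1 : ℤ)| - 1) % 4
      else
        2 * |(ik'.1 : ℤ) - (ik.1 : ℤ)| + 4 ≤ ik'.2 - ik.2 ∧
          (ik'.2 - ik.2) % 4 = (2 * |(ik'.1 : ℤ) - (ik.1 : ℤ)|) % 4

/-- A snake: a sequence of points of `X`, each in snake position w.r.t. the previous one. -/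
def IsSnake (S : Setting) {T : ℕ} (w : Fin T → ℕ × ℤ) : Prop :=
  (∀ t, w t ∈ X S) ∧
  ∀ (t : Fin T) (h : (t : ℕ) + 1 < T), SnakePos S (w t) (w ⟨(t : ℕ) + 1, h⟩)

/-- `p` is strictly above `p'`. -/
def StrictlyAbove (p p' : List (ℝ × ℝ)) : Prop :=
  ∀ a ∈ p, ∀ b ∈ p', a.1 = b.1 → a.2 < b.2

/-- A tuple of paths is non-overlapping. -/
def NonOverlapping {T : ℕ} (ps : Fin T → List (ℝ × ℝ)) : Prop :=
  ∀ s t : Fin T, s < t → StrictlyAbove (ps s) (ps t)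

/-- The set `𝒫̄` of non-overlapping tuples of paths attached to a snake. -/
def PBar (S : Setting) {T : ℕ} (w : Fin T → ℕ × ℤ) : Set (Fin T → List (ℝ × ℝ)) :=
  {ps | (∀ t, ps t ∈ P S (w t).1 (w t).2) ∧ NonOverlapping ps}

/-- The product `∏_t m(p_t)` of the monomials of a tuple of paths. -/
noncomputable def tmon (S : Setting) {T : ℕ} (ps : Fin T → List (ℝ × ℝ)) : (ℕ × ℤ) → ℤ :=
  ∑ t, mon S (ps t)

/-- Lowering move at `jl` on a tuple of paths: one component is lowered, the others
are unchanged. -/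
def TLoweredTo (S : Setting) {T : ℕ} (w : Fin T → ℕ × ℤ) (jl : ℕ × ℤ)
    (ps ps' : Fin T → List (ℝ × ℝ)) : Prop :=
  ∃ t, LoweredTo S (w t).1 (w t).2 jl.1 jl.2 (ps t) (ps' t) ∧ ∀ s, s ≠ t → ps' s = ps s

/-- Sequences of raising/lowering moves on a single path; the list records, for each move,
whether it was a lowering move (`true`) or a raising move (`false`), and its site. -/
inductive MoveSeq (S : Setting) (i : ℕ) (k : ℤ) :
    List (ℝ × ℝ) → List (ℝ × ℝ) → List (Bool × (ℕ × ℤ)) → Prop where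
  | nil (p : List (ℝ × ℝ)) : MoveSeq S i k p p []
  | lower {p q r : List (ℝ × ℝ)} {jl : ℕ × ℤ} {ms : List (Bool × (ℕ × ℤ))} :
      jl ∈ W S → LoweredTo S i k jl.1 jl.2 p q → MoveSeq S i k q r ms →
      MoveSeq S i k p r ((true, jl) :: ms)
  | raise {p q r : List (ℝ × ℝ)} {jl : ℕ × ℤ} {ms : List (Bool × (ℕ × ℤ))} :
      jl ∈ W S → LoweredTo S i k jl.1 jl.2 q p → MoveSeq S i k q r ms →
      MoveSeq S i k p r ((false, jl) :: ms)

/-- Sequences of raising/lowering moves on tuples of paths, all of whose intermediate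
tuples are non-overlapping. -/
inductive TMoveSeq (S : Setting) {T : ℕ} (w : Fin T → ℕ × ℤ) :
    (Fin T → List (ℝ × ℝ)) → (Fin T → List (ℝ × ℝ)) → List (Bool × (ℕ × ℤ)) → Prop where
  | nil (ps : Fin T → List (ℝ × ℝ)) : TMoveSeq S w ps ps []
  | lower {ps qs rs : Fin T → List (ℝ × ℝ)} {jl : ℕ × ℤ} {ms : List (Bool × (ℕ × ℤ))} :
      jl ∈ W S → TLoweredTo S w jl ps qs → NonOverlapping qs →
      TMoveSeq S w qs rs ms → TMoveSeq S w ps rs ((true, jl) :: ms)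
  | raise {ps qs rs : Fin T → List (ℝ × ℝ)} {jl : ℕ × ℤ} {ms : List (Bool × (ℕ × ℤ))} :
      jl ∈ W S → TLoweredTo S w jl qs ps → NonOverlapping qs →
      TMoveSeq S w qs rs ms → TMoveSeq S w ps rs ((false, jl) :: ms)

/-- Sequences of lowering moves on tuples of paths, all of whose intermediate tuples
are non-overlapping; the list records the sites, in order. -/
inductive TLowerSeq (S : Setting) {T : ℕ} (w : Fin T → ℕ × ℤ) :
    (Fin T → List (ℝ × ℝ)) → (Fin T → List (ℝ × ℝ)) → List (ℕ × ℤ) → Prop where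
  | nil (ps : Fin T → List (ℝ × ℝ)) : TLowerSeq S w ps ps []
  | cons {ps qs rs : Fin T → List (ℝ × ℝ)} {jl : ℕ × ℤ} {ms : List (ℕ × ℤ)} :
      jl ∈ W S → TLoweredTo S w jl ps qs → NonOverlapping qs →
      TLowerSeq S w qs rs ms → TLowerSeq S w ps rs (jl :: ms)

/-- Weak order on paths with the same x-coordinates: `p` is weakly above `p'`. -/
def WeaklyAbove (p p' : List (ℝ × ℝ)) : Prop :=
  p.length = p'.length ∧ ∀ r, r < p.length → (pt p r).2 ≤ (pt p' r).2

/-- `p` is weakly below `p'`. -/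
def WeaklyBelow (p p' : List (ℝ × ℝ)) : Prop :=
  p.length = p'.length ∧ ∀ r, r < p.length → (pt p' r).2 ≤ (pt p r).2

/-- The path `top(p, p')`. -/
def topPath (p p' : List (ℝ × ℝ)) : List (ℝ × ℝ) :=
  List.zipWith (fun a b => (a.1, min a.2 b.2)) p p'

/-- The distinguished point contained in the highest path `p⁺_{i,k}`. -/
def highPoint : Setting → ℕ → ℤ → ℝ × ℝ
  | .A _, i, k => ((i : ℝ), (k : ℝ))
  | .B n ε, i, k =>
      if i = n then (2 * (n : ℝ) - 1, (k : ℝ) - ε)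
      else (((iotaB n (i, k)).1 : ℝ), ((iotaB n (i, k)).2 : ℝ))

/-- The distinguished point contained in the lowest path `p⁻_{i,k}`. -/
def lowPoint : Setting → ℕ → ℤ → ℝ × ℝ
  | .A n, i, k => ((n : ℝ) + 1 - (i : ℝ), (k : ℝ) + (n : ℝ) + 1)
  | .B n ε, i, k =>
      if i = n then (2 * (n : ℝ) - 1, (k : ℝ) + 4 * (n : ℝ) - 2 + ε)
      else (((iotaB n (i, k + 4 * (n : ℤ) - 2)).1 : ℝ),
            ((iotaB n (i, k + 4 * (n : ℤ) - 2)).2 : ℝ))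

/-- The highest path `p⁺_{i,k}` : the path of `𝒫_{i,k}` with no lower corners. -/
noncomputable def highestPath (S : Setting) (i : ℕ) (k : ℤ) : List (ℝ × ℝ) :=
  Classical.epsilon fun p => p ∈ P S i k ∧ Cp S p false = ∅

/-- The lowest path `p⁻_{i,k}` : the path of `𝒫_{i,k}` with no upper corners. -/
noncomputable def lowestPath (S : Setting) (i : ℕ) (k : ℤ) : List (ℝ × ℝ) :=
  Classical.epsilon fun p => p ∈ P S i k ∧ Cp S p true = ∅




def CpA (n : ℕ) (p : List (ℝ × ℝ)) (up : Bool) : Set (ℕ × ℤ) :=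
    {jl | 1 ≤ jl.1 ∧ jl.1 ≤ n ∧
      pt p jl.1 = ((jl.1 : ℝ), (jl.2 : ℝ)) ∧
      (pt p (jl.1 - 1)).2 = (jl.2 : ℝ) + (if up then 1 else -1) ∧
      (pt p (jl.1 + 1)).2 = (jl.2 : ℝ) + (if up then 1 else -1)}


lemma pt_map_range {m : ℕ} {f : ℕ → ℝ × ℝ} {r : ℕ} (h : r < m) :
    pt ((List.range m).map f) r = f r := by
  simp [pt, List.getD_eq_getElem?_getD, List.getElem?_map, List.getElem?_range, h]
lemma pt_eq_getElem {p : List (ℝ × ℝ)} {r : ℕ} (h : r < p.length) : pt p r = p[r] := by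
  simp [pt, List.getD_eq_getElem?_getD, List.getElem?_eq_getElem, h]
lemma ext_pt {p q : List (ℝ × ℝ)} (hl : p.length = q.length)
    (h : ∀ r < p.length, pt p r = pt q r) : p = q := by
  apply List.ext_getElem hl
  intro r h1 h2
  have := h r h1
  rwa [pt_eq_getElem h1, pt_eq_getElem h2] at this
lemma mem_iff_pt {p : List (ℝ × ℝ)} {v : ℝ × ℝ} :
    v ∈ p ↔ ∃ r, r < p.length ∧ pt p r = v := by
  rw [List.mem_iff_getElem]
  constructor
  · rintro ⟨r, hr, h⟩; exact ⟨r, hr, by rwa [pt_eq_getElem hr]⟩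
  · rintro ⟨r, hr, h⟩; exact ⟨r, hr, by rwa [pt_eq_getElem hr] at h⟩
lemma chain_le (y : ℕ → ℝ) (c : ℝ) : ∀ a b : ℕ, a ≤ b →
    (∀ r, a ≤ r → r < b → y (r + 1) ≤ y r + c) → y b ≤ y a + ((b - a : ℕ) : ℝ) * c := by
  intro a b
  induction b with
  | zero => intro h _; interval_cases a; simp
  | succ b ih =>
    intro hab h
    rcases Nat.eq_or_lt_of_le hab with rfl | hlt
    · simp
    · have hb : a ≤ b := Nat.lt_succ_iff.mp hlt
      have h1 := ih hb (fun r h1 h2 => h r h1 (Nat.lt_succ_of_lt h2))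
      have h2 := h b hb (Nat.lt_succ_self b)
      have h3 : ((b + 1 - a : ℕ) : ℝ) = ((b - a : ℕ) : ℝ) + 1 := by
        have : b + 1 - a = (b - a) + 1 := by omega
        rw [this]; push_cast; ring
      rw [h3]; linarith
lemma chain_ge (y : ℕ → ℝ) (c : ℝ) (a b : ℕ) (hab : a ≤ b)
    (h : ∀ r, a ≤ r → r < b → y r - c ≤ y (r + 1)) :
    y a - ((b - a : ℕ) : ℝ) * c ≤ y b := by
  have := chain_le (fun r => -y r) c a b hab (fun r h1 h2 => by
    have := h r h1 h2; (try simp only); linarith)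
  (try simp only at this); linarith
lemma chain_eq (y : ℕ → ℝ) (c : ℝ) (a b : ℕ) (hab : a ≤ b)
    (h : ∀ r, a ≤ r → r < b → y (r + 1) = y r + c) : y b = y a + ((b - a : ℕ) : ℝ) * c := by
  have h1 := chain_le y c a b hab (fun r h1 h2 => le_of_eq (h r h1 h2))
  have h2 := chain_ge y (-c) a b hab (fun r h1 h2 => by rw [h r h1 h2]; ring_nf; rfl)
  have : y a - ((b - a : ℕ) : ℝ) * (-c) = y a + ((b - a : ℕ) : ℝ) * c := by ring
  rw [this] at h2
  linarith

lemma natsub {a b : ℕ} (h : b ≤ a) : ((a - b : ℕ) : ℝ) = (a : ℝ) - b := by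
  rw [Nat.cast_sub h]

section SpinBasic
variable {n : ℕ} {ε : ℝ} {l : ℤ} {p : List (ℝ × ℝ)}

lemma spin_lip_up (hp : p ∈ pathsBspin n ε l) {a b : ℕ} (hab : a ≤ b) (hb : b ≤ n - 1) :
    (pt p b).2 ≤ (pt p a).2 + 2 * ((b - a : ℕ) : ℝ) := by
  obtain ⟨-, -, -, -, hstep, -⟩ := hp
  have := chain_le (fun r => (pt p r).2) 2 a b hab (fun r h1 h2 => by
    rcases hstep r (by omega) with h | h <;> (try simp only) <;> linarith)
  (try simp only at this); linarith

lemma spin_lip_dn (hp : p ∈ pathsBspin n ε l) {a b : ℕ} (hab : a ≤ b) (hb : b ≤ n - 1) :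
    (pt p a).2 - 2 * ((b - a : ℕ) : ℝ) ≤ (pt p b).2 := by
  obtain ⟨-, -, -, -, hstep, -⟩ := hp
  have := chain_ge (fun r => (pt p r).2) 2 a b hab (fun r h1 h2 => by
    rcases hstep r (by omega) with h | h <;> (try simp only) <;> linarith)
  (try simp only at this); linarith

lemma spin_int (hn : 2 ≤ n) (hp : p ∈ pathsBspin n ε l) :
    ∀ r, r ≤ n - 1 → ∃ c : ℤ, (pt p r).2 = ((l + 2 * (n : ℤ) - 1 + 2 * c : ℤ) : ℝ)
      ∧ c % 2 = (r : ℤ) % 2 := by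
  obtain ⟨-, -, -, hy0, hstep, -⟩ := hp
  intro r
  induction r with
  | zero => intro _; exact ⟨0, by rw [hy0]; push_cast; ring, rfl⟩
  | succ r ih =>
    intro hr
    obtain ⟨c, hc, hcp⟩ := ih (by omega)
    rcases hstep r (by omega) with h | h
    · exact ⟨c + 1, by push_cast at hc ⊢; linarith, by push_cast; omega⟩
    · exact ⟨c - 1, by push_cast at hc ⊢; linarith, by push_cast; omega⟩

lemma spin_x (hp : p ∈ pathsBspin n ε l) :
    ∀ r, r < n → (pt p r).1 = (if l % 4 = 3 then 2 * (r : ℝ) else 4 * (n : ℝ) - 2 - 2 * (r : ℝ)) := by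
  obtain ⟨-, hx, -⟩ := hp
  intro r hr
  by_cases h4 : l % 4 = 3
  · rw [if_pos h4] at hx ⊢; exact hx r hr
  · rw [if_neg h4] at hx ⊢; exact hx r hr

lemma spin_x_ne (hp : p ∈ pathsBspin n ε l) {r : ℕ} (hr : r < n) :
    (pt p r).1 ≠ 2 * (n : ℝ) - 1 := by
  have hx := spin_x hp r hr
  have h1 : ((r : ℕ) : ℝ) ≤ ((n - 1 : ℕ) : ℝ) := by exact_mod_cast (by omega : r ≤ n - 1)
  have h2 : ((n - 1 : ℕ) : ℝ) = (n : ℝ) - 1 := by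
    push_cast [Nat.cast_sub (by omega : 1 ≤ n)]; ring
  rw [h2] at h1
  by_cases h4 : l % 4 = 3 <;> rw [hx] <;> simp [h4] <;> intro hq <;> linarith

lemma spin_mem_x (hp : p ∈ pathsBspin n ε l) {v : ℝ × ℝ} (hv : v ∈ p)
    (hx : v.1 = 2 * (n : ℝ) - 1) : v = pt p n := by
  rw [mem_iff_pt] at hv
  obtain ⟨r, hr, hpt⟩ := hv
  rw [hp.1] at hr
  rcases Nat.lt_or_ge r n with h | h
  · exact absurd (by rw [hpt]; exact hx) (spin_x_ne hp h)
  · have : r = n := by omega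
    rw [← this, hpt]

lemma spin_ymax (hn : 2 ≤ n) (hε : 0 < ε) (hp : p ∈ pathsBspin n ε l) :
    (pt p n).2 ≤ (l : ℝ) + 4 * n - 2 + ε := by
  have h1 : (pt p (n - 1)).2 ≤ (pt p 0).2 + 2 * ((n - 1 - 0 : ℕ) : ℝ) :=
    spin_lip_up hp (by omega) (by omega)
  have h2 : ((n - 1 - 0 : ℕ) : ℝ) = (n : ℝ) - 1 := by
    rw [Nat.sub_zero, natsub (by omega)]; norm_num
  rw [h2, hp.2.2.2.1] at h1
  rcases hp.2.2.2.2.2 with h | h <;> linarith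

lemma spin_ext (hn : 2 ≤ n) (hp : p ∈ pathsBspin n ε l) {q : List (ℝ × ℝ)}
    (hq : q ∈ pathsBspin n ε l) (h : ∀ r, r ≤ n → (pt p r).2 = (pt q r).2) : p = q := by
  apply ext_pt (by rw [hp.1, hq.1])
  intro r hr
  rw [hp.1] at hr
  rcases Nat.lt_or_ge r n with hlt | hge
  · exact Prod.ext (by rw [spin_x hp r hlt, spin_x hq r hlt]) (h r (by omega))
  · have : r = n := by omega
    subst this
    exact Prod.ext (by rw [hp.2.2.1, hq.2.2.1]) (h r (by omega))

lemma spin_force (hn : 2 ≤ n) (hε : 0 < ε) (hp : p ∈ pathsBspin n ε l)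
    (htop : (pt p n).2 = (l : ℝ) + 4 * n - 2 + ε) :
    (∀ r, r ≤ n - 1 → (pt p r).2 = (l : ℝ) + 2 * n - 1 + 2 * r) := by
  have hy0 := hp.2.2.2.1
  have hn1 : (pt p (n - 1)).2 = (l : ℝ) + 4 * n - 3 := by
    have h1 : (pt p (n - 1)).2 ≤ (pt p 0).2 + 2 * ((n - 1 - 0 : ℕ) : ℝ) :=
      spin_lip_up hp (by omega) (by omega)
    have h2 : ((n - 1 - 0 : ℕ) : ℝ) = (n : ℝ) - 1 := by
      rw [Nat.sub_zero, natsub (by omega)]; norm_num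
    rw [h2, hy0] at h1
    rcases hp.2.2.2.2.2 with h | h <;> linarith
  intro r hr
  have h1 : (pt p r).2 ≤ (pt p 0).2 + 2 * ((r - 0 : ℕ) : ℝ) := spin_lip_up hp (by omega) (by omega)
  simp only [Nat.sub_zero] at h1
  rw [hy0] at h1
  have h2 : (pt p (n - 1)).2 ≤ (pt p r).2 + 2 * ((n - 1 - r : ℕ) : ℝ) :=
    spin_lip_up hp (by omega) (by omega)
  have h3 : ((n - 1 - r : ℕ) : ℝ) = (n : ℝ) - 1 - r := by
    rw [natsub (by omega : r ≤ n - 1), natsub (by omega : 1 ≤ n)]; norm_num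
  rw [h3, hn1] at h2
  linarith

end SpinBasic

section Corners
variable {n : ℕ} {ε : ℝ}

lemma iotaB_snd (n : ℕ) (jl : ℕ × ℤ) : (iotaB n jl).2 = jl.2 := by
  unfold iotaB; split_ifs <;> rfl

lemma iotaB_fst_cases {s : ℕ} {c : ℤ} (hsn : s ≠ n) :
    (iotaB n (s, c)).1 = 2 * (s : ℤ) ∨ (iotaB n (s, c)).1 = 4 * (n : ℤ) - 2 - 2 * s := by
  unfold iotaB
  rw [if_neg hsn]
  split_ifs
  · left; rfl
  · right; rfl

lemma iota_eq_left {s : ℕ} {c : ℤ} (hsn : s ≠ n)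
    (h : (2 * (n : ℤ) + c - 2 * s) % 4 = 2) : iotaB n (s, c) = (2 * (s : ℤ), c) := by
  unfold iotaB; rw [if_neg hsn, if_pos h]

lemma iota_eq_right {s : ℕ} {c : ℤ} (hsn : s ≠ n)
    (h : (2 * (n : ℤ) + c - 2 * s) % 4 ≠ 2) :
    iotaB n (s, c) = (4 * (n : ℤ) - 2 - 2 * (s : ℤ), c) := by
  unfold iotaB; rw [if_neg hsn, if_neg h]

lemma cornerB_mem {Q : List (ℝ × ℝ)} {u s : ℕ} {c : ℤ}
    (hs1 : 1 ≤ s) (hsn : s < n) (hc : c % 2 = 0) (hu : 1 ≤ u) (hu2 : u + 1 < Q.length)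
    (hpt : pt Q u = (((iotaB n (s, c)).1 : ℝ), (c : ℝ)))
    (hm1 : (pt Q u).2 < (pt Q (u - 1)).2) (hm2 : (pt Q u).2 < (pt Q (u + 1)).2) :
    (s, c) ∈ Cp (.B n ε) Q true := by
  have hx := iotaB_fst_cases (show s ≠ n by omega) (c := c)
  refine ⟨Or.inr ⟨hs1, hsn, hc⟩, Or.inl ⟨u, hu, hu2, ?_, ?_, ?_, ?_, ?_⟩⟩
  · rw [hpt, iotaB_snd]
  · rcases hx with h | h <;> rw [h] <;> omega
  · rcases hx with h | h <;> rw [h] <;> omega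
  · rcases hx with h | h <;> rw [h] <;> omega
  · simp only [if_true]; exact ⟨hm1, hm2⟩

lemma spinCorner_mem {Q : List (ℝ × ℝ)} {c : ℤ} (hc2 : c % 2 = 1)
    (hin : (2 * (n : ℝ) - 1, (c : ℝ) - ε) ∈ Q) (hnotin : (2 * (n : ℝ) - 1, (c : ℝ) + ε) ∉ Q) :
    ((n, c) : ℕ × ℤ) ∈ Cp (.B n ε) Q true := by
  refine ⟨Or.inl ⟨rfl, hc2⟩, Or.inr ⟨rfl, ?_⟩⟩
  simp only [if_true]
  exact ⟨hin, hnotin⟩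

lemma spin_corner {l : ℤ} {b Q : List (ℝ × ℝ)} {s u : ℕ}
    (hn : 2 ≤ n) (hb : b ∈ pathsBspin n ε l) (hl : l % 2 = 1)
    (hs1 : 1 ≤ s) (hs : s ≤ n - 1)
    (hu : 1 ≤ u) (hu2 : u + 1 < Q.length)
    (hQu : pt Q u = pt b s)
    (hm1 : (pt Q u).2 < (pt Q (u - 1)).2) (hm2 : (pt Q u).2 < (pt Q (u + 1)).2) :
    ∃ jl, jl ∈ Cp (.B n ε) Q true := by
  obtain ⟨c, hcval, hcpar⟩ := spin_int hn hb s hs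
  have hxs := spin_x hb s (by omega)
  refine ⟨(s, l + 2 * (n : ℤ) - 1 + 2 * c),
    cornerB_mem hs1 (by omega) (by omega) hu hu2 ?_ hm1 hm2⟩
  rw [hQu]
  by_cases h4 : l % 4 = 3
  · rw [iota_eq_left (show s ≠ n by omega) (by omega)]
    refine Prod.ext ?_ hcval
    rw [hxs, if_pos h4]; push_cast; ring
  · rw [iota_eq_right (show s ≠ n by omega) (by omega)]
    refine Prod.ext ?_ hcval
    rw [hxs, if_neg h4]; push_cast; ring

end Corners

section QSpin
variable {n : ℕ} {ε : ℝ} {l : ℤ}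

def qBspin (n : ℕ) (ε : ℝ) (l : ℤ) : List (ℝ × ℝ) :=
  (List.range (n + 1)).map fun r : ℕ =>
    if r = n then (2 * (n : ℝ) - 1, (l : ℝ) + 4 * n - 2 + ε)
    else ((if l % 4 = 3 then 2 * (r : ℝ) else 4 * (n : ℝ) - 2 - 2 * (r : ℝ)),
          (l : ℝ) + 2 * n - 1 + 2 * (r : ℝ))

lemma qBspin_len : (qBspin n ε l).length = n + 1 := by
  rw [qBspin, List.length_map, List.length_range]

lemma qBspin_pt {r : ℕ} (h : r < n + 1) :
    pt (qBspin n ε l) r =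
      if r = n then (2 * (n : ℝ) - 1, (l : ℝ) + 4 * n - 2 + ε)
      else ((if l % 4 = 3 then 2 * (r : ℝ) else 4 * (n : ℝ) - 2 - 2 * (r : ℝ)),
            (l : ℝ) + 2 * n - 1 + 2 * (r : ℝ)) := by
  rw [qBspin]; exact pt_map_range h

lemma qBspin_mem (hn : 2 ≤ n) : qBspin n ε l ∈ pathsBspin n ε l := by
  refine ⟨qBspin_len, ?_, ?_, ?_, ?_, ?_⟩
  · split_ifs with h4 <;> intro r hr <;>
      rw [qBspin_pt (by omega), if_neg (by omega : ¬ r = n)] <;> simp [h4]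
  · rw [qBspin_pt (by omega), if_pos rfl]
  · rw [qBspin_pt (by omega), if_neg (by omega : ¬ (0 : ℕ) = n)]
    push_cast; ring
  · intro r hr
    rw [qBspin_pt (by omega : r + 1 < n + 1), qBspin_pt (by omega : r < n + 1),
      if_neg (by omega : ¬ r + 1 = n), if_neg (by omega : ¬ r = n)]
    left; push_cast; ring
  · left
    rw [qBspin_pt (by omega : n < n + 1), qBspin_pt (by omega : n - 1 < n + 1),
      if_pos rfl, if_neg (by omega : ¬ n - 1 = n)]
    simp only
    rw [natsub (by omega : 1 ≤ n)]
    push_cast; ring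

end QSpin

section BSpinCase
variable {n : ℕ} {ε : ℝ} {k : ℤ} {p : List (ℝ × ℝ)}

lemma qBspin_low : (2 * (n : ℝ) - 1, (k : ℝ) + 4 * n - 2 + ε) ∈ qBspin n ε k := by
  rw [mem_iff_pt]
  refine ⟨n, by rw [qBspin_len]; omega, ?_⟩
  rw [qBspin_pt (by omega), if_pos rfl]

lemma Bspin_force (hn : 2 ≤ n) (hε : 0 < ε) (hp : p ∈ pathsBspin n ε k)
    (hlow : (2 * (n : ℝ) - 1, (k : ℝ) + 4 * n - 2 + ε) ∈ p) : p = qBspin n ε k := by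
  have hv := spin_mem_x hp hlow rfl
  have htop : (pt p n).2 = (k : ℝ) + 4 * n - 2 + ε := by rw [← hv]
  have hforce := spin_force hn hε hp htop
  apply spin_ext hn hp (qBspin_mem hn)
  intro r hr
  rcases Nat.lt_or_ge r n with hlt | hge
  · rw [hforce r (by omega), qBspin_pt (by omega), if_neg (by omega : ¬ r = n)]
  · have : r = n := by omega
    subst this
    rw [htop, qBspin_pt (by omega), if_pos rfl]

lemma Bspin_noUpper (hn : 2 ≤ n) (hε : 0 < ε) (hε2 : ε < 1/2) (hk : k % 2 = 1) :
    Cp (.B n ε) (qBspin n ε k) true = ∅ := by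
  rw [Set.eq_empty_iff_forall_notMem]
  rintro ⟨j, c⟩ ⟨hXB, hor⟩
  have hq := qBspin_mem (ε := ε) (l := k) hn
  rcases hor with ⟨r, hr1, hr2, hptι, hι0, hι1, hι2, hmin⟩ | ⟨hj, hspin⟩
  · rw [qBspin_len] at hr2
    simp only [if_true] at hmin
    have hrn : r < n := by omega
    have hy1 : (pt (qBspin n ε k) r).2 = (k : ℝ) + 2 * n - 1 + 2 * r := by
      rw [qBspin_pt (by omega), if_neg (by omega : ¬ r = n)]
    have hy0 : (pt (qBspin n ε k) (r - 1)).2 = (k : ℝ) + 2 * n - 1 + 2 * ((r : ℝ) - 1) := by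
      rw [qBspin_pt (by omega), if_neg (by omega : ¬ r - 1 = n)]
      simp only
      rw [natsub (by omega : 1 ≤ r)]
      norm_num
    rw [hy1, hy0] at hmin
    linarith [hmin.1]
  · simp only [if_true] at hspin
    obtain ⟨hin, hnotin⟩ := hspin
    rw [mem_iff_pt] at hin
    obtain ⟨r, hr, hpt⟩ := hin
    rw [qBspin_len] at hr
    rcases Nat.lt_or_ge r n with hlt | hge
    · exact absurd (by rw [hpt]) (spin_x_ne hq hlt)
    · rw [show r = n by omega] at hpt
      have hy : (pt (qBspin n ε k) n).2 = (k : ℝ) + 4 * n - 2 + ε := by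
        rw [qBspin_pt (by omega : n < n + 1), if_pos rfl]
      have h2 : (c : ℝ) - ε = (k : ℝ) + 4 * n - 2 + ε := by
        rw [← hy, hpt]
      have h3 : (c : ℝ) = ((k + 4 * n - 2 : ℤ) : ℝ) + 2 * ε := by push_cast; linarith
      have h4 : (0 : ℝ) < ((c - (k + 4 * n - 2) : ℤ) : ℝ) := by push_cast; linarith
      have h5 : ((c - (k + 4 * n - 2) : ℤ) : ℝ) < 1 := by push_cast; linarith
      have h4' : (0 : ℤ) < c - (k + 4 * n - 2) := by exact_mod_cast h4
      have h5' : (c - (k + 4 * n - 2) : ℤ) < 1 := by exact_mod_cast h5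
      omega

lemma Bspin_noUpper_force (hn : 2 ≤ n) (hε : 0 < ε) (hε2 : ε < 1/2) (hk : k % 2 = 1)
    (hp : p ∈ pathsBspin n ε k) (hC : Cp (.B n ε) p true = ∅) : p = qBspin n ε k := by
  classical
  have hxn := hp.2.2.1
  have hlast := hp.2.2.2.2.2
  have hlen := hp.1
  -- points of p with x-coordinate 2n-1 equal pt p n
  have hx2n : ∀ v ∈ p, v.1 = 2 * (n : ℝ) - 1 → v = pt p n := fun v hv hx => spin_mem_x hp hv hx
  -- step 1 : last step up
  have hup : (pt p n).2 - (pt p (n - 1)).2 = 1 + ε := by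
    rcases hlast with h | h
    · exact h
    · exfalso
      obtain ⟨c, hcval, hcpar⟩ := spin_int hn hp (n - 1) (by omega)
      set cv := k + 2 * (n : ℤ) - 1 + 2 * c with hcv
      have hco : (cv - 1) % 2 = 1 := by omega
      have hmem : ((n, cv - 1) : ℕ × ℤ) ∈ Cp (.B n ε) p true := by
        apply spinCorner_mem hco
        · rw [mem_iff_pt]
          refine ⟨n, by omega, ?_⟩
          refine Prod.ext hxn ?_
          simp only
          push_cast
          push_cast at hcval
          linarith
        · intro hmm
          have := hx2n _ hmm rfl
          have h2 := congrArg Prod.snd this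
          simp only at h2
          push_cast at h2 hcval
          linarith
      rw [hC] at hmem
      exact hmem
  -- step 2 : all double steps up
  have hn1 : (pt p (n - 1)).2 = (k : ℝ) + 2 * n - 1 + 2 * ((n : ℝ) - 1) := by
    by_contra hne
    have hub : (pt p (n - 1)).2 ≤ (pt p 0).2 + 2 * ((n - 1 - 0 : ℕ) : ℝ) :=
      spin_lip_up hp (by omega) (by omega)
    have hcst : ((n - 1 - 0 : ℕ) : ℝ) = (n : ℝ) - 1 := by
      rw [Nat.sub_zero, natsub (by omega)]; norm_num
    rw [hcst, hp.2.2.2.1] at hub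
    have hlt : (pt p (n - 1)).2 < (k : ℝ) + 2 * n - 1 + 2 * ((n : ℝ) - 1) := by
      cases lt_or_eq_of_le hub with
      | inl h => linarith
      | inr h => exact absurd (by linarith) hne
    -- there is a down step
    have hdown : ∃ r, r < n - 1 ∧ (pt p (r + 1)).2 - (pt p r).2 = -2 := by
      by_contra hall
      push_neg at hall
      have hch := chain_ge (fun r => (pt p r).2) (-2) 0 (n - 1) (by omega) (fun r h1 h2 => by
        rcases hp.2.2.2.2.1 r (by omega) with h | h
        · (try simp only); linarith
        · exact absurd h (hall r h2))
      have hch' : (pt p 0).2 - ((n - 1 - 0 : ℕ) : ℝ) * (-2) ≤ (pt p (n - 1)).2 := hch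
      rw [hcst, hp.2.2.2.1] at hch'
      linarith
    obtain ⟨r₀, hr₀n, hr₀⟩ := hdown
    have hQ : ∃ r, r₀ < r ∧ r ≤ n - 1 ∧ (pt p r).2 < (pt p (r + 1)).2 := by
      refine ⟨n - 1, by omega, by omega, ?_⟩
      have : n - 1 + 1 = n := by omega
      rw [this]
      linarith [hup]
    set r₁ := Nat.find hQ with hr₁def
    obtain ⟨hr₁a, hr₁b, hr₁c⟩ := Nat.find_spec hQ
    rw [← hr₁def] at hr₁a hr₁b hr₁c
    have hprevlt : (pt p r₁).2 < (pt p (r₁ - 1)).2 := by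
      rcases Nat.eq_or_lt_of_le (show r₀ + 1 ≤ r₁ by omega) with he | hlt'
      · have : r₁ - 1 = r₀ := by omega
        rw [this]
        have h1 : r₀ + 1 = r₁ := he
        rw [← h1]
        linarith
      · have hnot := Nat.find_min hQ (show r₁ - 1 < r₁ by omega)
        have hno : ¬ (pt p (r₁ - 1)).2 < (pt p (r₁ - 1 + 1)).2 := fun hcon =>
          hnot ⟨by omega, by omega, hcon⟩
        have hstep' := hp.2.2.2.2.1 (r₁ - 1) (by omega)
        have he : r₁ - 1 + 1 = r₁ := by omega
        rw [he] at hno hstep'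
        rcases hstep' with h | h
        · exact absurd (by linarith) hno
        · linarith
    obtain ⟨jl, hjl⟩ := spin_corner hn hp hk (show 1 ≤ r₁ by omega) hr₁b
      (show 1 ≤ r₁ by omega) (by omega) rfl hprevlt hr₁c
    rw [hC] at hjl
    exact hjl
  -- conclude
  have htop : (pt p n).2 = (k : ℝ) + 4 * n - 2 + ε := by
    have : n - 1 + 1 = n := by omega
    rw [hn1] at hup
    linarith
  exact Bspin_force hn hε hp (by
    rw [mem_iff_pt]
    exact ⟨n, by omega, Prod.ext hxn htop⟩)

end BSpinCase

section AppendHelpers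
variable {n : ℕ}

lemma pt_append_left {a c : List (ℝ × ℝ)} {r : ℕ} (h : r < a.length) :
    pt (a ++ c) r = pt a r := by
  rw [pt_eq_getElem (by rw [List.length_append]; omega), pt_eq_getElem h]
  exact List.getElem_append_left h

lemma pt_append_right {a b : List (ℝ × ℝ)} {u : ℕ} (ha : a.length = n + 1)
    (hb : b.length = n + 1) (hu : u ≤ n) :
    pt (a ++ b.reverse) (2 * n + 1 - u) = pt b u := by
  have hlen : (a ++ b.reverse).length = 2 * n + 2 := by
    rw [List.length_append, List.length_reverse, ha, hb]; omega
  rw [pt_eq_getElem (by omega), pt_eq_getElem (show u < b.length by omega)]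
  rw [List.getElem_append_right (by omega)]
  rw [List.getElem_reverse]
  congr 1
  omega

lemma mem_append_cases {a b : List (ℝ × ℝ)} {v : ℝ × ℝ} (hv : v ∈ a ++ b.reverse) :
    v ∈ a ∨ v ∈ b := by
  rcases List.mem_append.mp hv with h | h
  · exact Or.inl h
  · exact Or.inr (List.mem_reverse.mp h)

end AppendHelpers

section SpinForce
variable {n : ℕ} {ε : ℝ} {l : ℤ} {b : List (ℝ × ℝ)}

/-- If the last step of a spin path goes up and the path has no interior local minimum,
then all its double steps go up. -/
lemma spin_noLocalMin_force (hn : 2 ≤ n) (hb : b ∈ pathsBspin n ε l)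
    (hupend : (pt b (n - 1)).2 < (pt b n).2)
    (hno : ∀ s, 1 ≤ s → s ≤ n - 1 →
      ¬((pt b s).2 < (pt b (s - 1)).2 ∧ (pt b s).2 < (pt b (s + 1)).2)) :
    ∀ r, r ≤ n - 1 → (pt b r).2 = (l : ℝ) + 2 * n - 1 + 2 * r := by
  classical
  have hy0 := hb.2.2.2.1
  have hn1 : (pt b (n - 1)).2 = (l : ℝ) + 2 * n - 1 + 2 * ((n : ℝ) - 1) := by
    by_contra hne
    have hub : (pt b (n - 1)).2 ≤ (pt b 0).2 + 2 * ((n - 1 - 0 : ℕ) : ℝ) :=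
      spin_lip_up hb (by omega) (by omega)
    have hcst : ((n - 1 - 0 : ℕ) : ℝ) = (n : ℝ) - 1 := by
      rw [Nat.sub_zero, natsub (by omega)]; norm_num
    rw [hcst, hy0] at hub
    have hlt : (pt b (n - 1)).2 < (l : ℝ) + 2 * n - 1 + 2 * ((n : ℝ) - 1) := by
      cases lt_or_eq_of_le hub with
      | inl h => linarith
      | inr h => exact absurd (by linarith) hne
    have hdown : ∃ r, r < n - 1 ∧ (pt b (r + 1)).2 - (pt b r).2 = -2 := by
      by_contra hall
      push_neg at hall
      have hch := chain_ge (fun r => (pt b r).2) (-2) 0 (n - 1) (by omega) (fun r h1 h2 => by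
        rcases hb.2.2.2.2.1 r (by omega) with h | h
        · (try simp only); linarith
        · exact absurd h (hall r h2))
      have hch' : (pt b 0).2 - ((n - 1 - 0 : ℕ) : ℝ) * (-2) ≤ (pt b (n - 1)).2 := hch
      rw [hcst, hy0] at hch'
      linarith
    obtain ⟨r₀, hr₀n, hr₀⟩ := hdown
    have hQ : ∃ r, r₀ < r ∧ r ≤ n - 1 ∧ (pt b r).2 < (pt b (r + 1)).2 := by
      refine ⟨n - 1, by omega, by omega, ?_⟩
      have : n - 1 + 1 = n := by omega
      rw [this]
      exact hupend
    set r₁ := Nat.find hQ with hr₁def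
    obtain ⟨hr₁a, hr₁b, hr₁c⟩ := Nat.find_spec hQ
    rw [← hr₁def] at hr₁a hr₁b hr₁c
    have hprevlt : (pt b r₁).2 < (pt b (r₁ - 1)).2 := by
      rcases Nat.eq_or_lt_of_le (show r₀ + 1 ≤ r₁ by omega) with he | hlt'
      · have h0 : r₁ - 1 = r₀ := by omega
        rw [h0]
        have h1 : r₀ + 1 = r₁ := he
        rw [← h1]
        linarith
      · have hnot := Nat.find_min hQ (show r₁ - 1 < r₁ by omega)
        have hno' : ¬ (pt b (r₁ - 1)).2 < (pt b (r₁ - 1 + 1)).2 := fun hcon =>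
          hnot ⟨by omega, by omega, hcon⟩
        have hstep' := hb.2.2.2.2.1 (r₁ - 1) (by omega)
        have he : r₁ - 1 + 1 = r₁ := by omega
        rw [he] at hno' hstep'
        rcases hstep' with h | h
        · exact absurd (by linarith) hno'
        · linarith
    exact hno r₁ (by omega) hr₁b ⟨hprevlt, hr₁c⟩
  intro r hr
  have h1 : (pt b r).2 ≤ (pt b 0).2 + 2 * ((r - 0 : ℕ) : ℝ) := spin_lip_up hb (by omega) (by omega)
  simp only [Nat.sub_zero] at h1
  rw [hy0] at h1
  have h2 : (pt b (n - 1)).2 ≤ (pt b r).2 + 2 * ((n - 1 - r : ℕ) : ℝ) :=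
    spin_lip_up hb (by omega) (by omega)
  have h3 : ((n - 1 - r : ℕ) : ℝ) = (n : ℝ) - 1 - r := by
    rw [natsub (by omega : r ≤ n - 1), natsub (by omega : 1 ≤ n)]; norm_num
  rw [h3, hn1] at h2
  linarith

end SpinForce

section QBb
variable {n i : ℕ} {ε : ℝ} {l : ℤ}

def qBb (n : ℕ) (ε : ℝ) (l : ℤ) (i : ℕ) : List (ℝ × ℝ) :=
  (List.range (n + 1)).map fun r : ℕ =>
    if r = n then (2 * (n : ℝ) - 1, (l : ℝ) + 4 * i - ε)
    else ((if l % 4 = 3 then 2 * (r : ℝ) else 4 * (n : ℝ) - 2 - 2 * (r : ℝ)),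
          (l : ℝ) + 2 * n - 1 + 2 * min (r : ℝ) (2 * (i : ℝ) - r))

lemma qBb_len : (qBb n ε l i).length = n + 1 := by
  rw [qBb, List.length_map, List.length_range]

lemma qBb_pt {r : ℕ} (h : r < n + 1) :
    pt (qBb n ε l i) r =
      if r = n then (2 * (n : ℝ) - 1, (l : ℝ) + 4 * i - ε)
      else ((if l % 4 = 3 then 2 * (r : ℝ) else 4 * (n : ℝ) - 2 - 2 * (r : ℝ)),
            (l : ℝ) + 2 * n - 1 + 2 * min (r : ℝ) (2 * (i : ℝ) - r)) := by
  rw [qBb]; exact pt_map_range h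

lemma qBb_min_left {r : ℕ} (h : r ≤ i) : min (r : ℝ) (2 * (i : ℝ) - r) = (r : ℝ) := by
  apply min_eq_left
  have : ((r : ℕ) : ℝ) ≤ ((i : ℕ) : ℝ) := by exact_mod_cast h
  linarith

lemma qBb_min_right {r : ℕ} (h : i ≤ r) : min (r : ℝ) (2 * (i : ℝ) - r) = 2 * (i : ℝ) - r := by
  apply min_eq_right
  have : ((i : ℕ) : ℝ) ≤ ((r : ℕ) : ℝ) := by exact_mod_cast h
  linarith

lemma qBb_mem (hn : 2 ≤ n) (hi : i < n) : qBb n ε l i ∈ pathsBspin n ε l := by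
  refine ⟨qBb_len, ?_, ?_, ?_, ?_, ?_⟩
  · split_ifs with h4 <;> intro r hr <;>
      rw [qBb_pt (by omega), if_neg (by omega : ¬ r = n)] <;> simp [h4]
  · rw [qBb_pt (by omega), if_pos rfl]
  · rw [qBb_pt (by omega), if_neg (by omega : ¬ (0 : ℕ) = n)]
    simp only
    rw [qBb_min_left (by omega)]
    push_cast; ring
  · intro r hr
    rw [qBb_pt (by omega : r + 1 < n + 1), qBb_pt (by omega : r < n + 1),
      if_neg (by omega : ¬ r + 1 = n), if_neg (by omega : ¬ r = n)]
    simp only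
    rcases Nat.lt_or_ge r i with h | h
    · left
      rw [qBb_min_left (by omega : r + 1 ≤ i), qBb_min_left (by omega : r ≤ i)]
      push_cast; ring
    · right
      rw [qBb_min_right (by omega : i ≤ r + 1), qBb_min_right h]
      push_cast; ring
  · right
    rw [qBb_pt (by omega : n < n + 1), qBb_pt (by omega : n - 1 < n + 1),
      if_pos rfl, if_neg (by omega : ¬ n - 1 = n)]
    simp only
    rw [qBb_min_right (by omega : i ≤ n - 1), natsub (by omega : 1 ≤ n)]
    push_cast; ring

end QBb

section QBB
variable {n i : ℕ} {ε : ℝ} {k : ℤ}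

def qBB (n : ℕ) (ε : ℝ) (i : ℕ) (k : ℤ) : List (ℝ × ℝ) :=
  qBspin n ε (k - (2 * (n : ℤ) - 2 * (i : ℤ) - 1)) ++
    (qBb n ε (k + (2 * (n : ℤ) - 2 * (i : ℤ) - 1)) i).reverse

lemma qBB_len : (qBB n ε i k).length = 2 * n + 2 := by
  rw [qBB, List.length_append, List.length_reverse, qBspin_len, qBb_len]; omega

lemma qBB_pt_left {r : ℕ} (h : r < n + 1) :
    pt (qBB n ε i k) r = pt (qBspin n ε (k - (2 * (n : ℤ) - 2 * (i : ℤ) - 1))) r := by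
  rw [qBB]; exact pt_append_left (by rw [qBspin_len]; omega)

lemma qBB_pt_right {u : ℕ} (h : u ≤ n) :
    pt (qBB n ε i k) (2 * n + 1 - u) =
      pt (qBb n ε (k + (2 * (n : ℤ) - 2 * (i : ℤ) - 1)) i) u := by
  rw [qBB]; exact pt_append_right qBspin_len qBb_len h

lemma iota_low (h1i : 1 ≤ i) (hi : i < n) (hk : k % 2 = 0) :
    (iotaB n (i, k + 4 * (n : ℤ) - 2) = (2 * (i : ℤ), k + 4 * (n : ℤ) - 2) ∧
      (k + (2 * (n : ℤ) - 2 * (i : ℤ) - 1)) % 4 = 3) ∨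
    (iotaB n (i, k + 4 * (n : ℤ) - 2) = (4 * (n : ℤ) - 2 - 2 * (i : ℤ), k + 4 * (n : ℤ) - 2) ∧
      (k + (2 * (n : ℤ) - 2 * (i : ℤ) - 1)) % 4 = 1) := by
  by_cases h : (2 * (n : ℤ) + (k + 4 * (n : ℤ) - 2) - 2 * (i : ℤ)) % 4 = 2
  · exact Or.inl ⟨iota_eq_left (by omega) h, by omega⟩
  · exact Or.inr ⟨iota_eq_right (by omega) h, by omega⟩

lemma qBB_mem (hn : 2 ≤ n) (hε : 0 < ε) (hi : i < n) :
    qBB n ε i k ∈ pathsB n ε i k := by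
  rw [pathsB, if_neg (by omega : ¬ i = n)]
  refine ⟨_, _, qBspin_mem hn, qBb_mem hn hi, rfl, ?_, ?_⟩
  · rw [qBspin_pt (by omega : n < n + 1), if_pos rfl, qBb_pt (by omega : n < n + 1), if_pos rfl]
  · rw [qBspin_pt (by omega : n < n + 1), if_pos rfl, qBb_pt (by omega : n < n + 1), if_pos rfl]
    simp only
    push_cast
    linarith

lemma qBb_at_i (hi : i < n) :
    pt (qBb n ε (k + (2 * (n : ℤ) - 2 * (i : ℤ) - 1)) i) i =
      ((if (k + (2 * (n : ℤ) - 2 * (i : ℤ) - 1)) % 4 = 3 then 2 * (i : ℝ)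
        else 4 * (n : ℝ) - 2 - 2 * (i : ℝ)), ((k + 4 * (n : ℤ) - 2 : ℤ) : ℝ)) := by
  rw [qBb_pt (by omega : i < n + 1), if_neg (by omega : ¬ i = n)]
  refine Prod.ext rfl ?_
  simp only
  rw [qBb_min_right (le_refl i)]
  push_cast; ring

lemma qBb_mem_i (hi : i < n) :
    pt (qBb n ε (k + (2 * (n : ℤ) - 2 * (i : ℤ) - 1)) i) i ∈ qBB n ε i k := by
  rw [qBB]
  apply List.mem_append_right
  rw [List.mem_reverse, mem_iff_pt]
  exact ⟨i, by rw [qBb_len]; omega, rfl⟩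

lemma qBB_low (h1i : 1 ≤ i) (hi : i < n) (hk : k % 2 = 0) :
    (((iotaB n (i, k + 4 * (n : ℤ) - 2)).1 : ℝ), ((iotaB n (i, k + 4 * (n : ℤ) - 2)).2 : ℝ)) ∈
      qBB n ε i k := by
  have h := qBb_mem_i (ε := ε) (k := k) hi
  rw [qBb_at_i hi] at h
  rcases iota_low h1i hi hk with ⟨hio, h4⟩ | ⟨hio, h4⟩
  · rw [hio]
    rw [if_pos h4] at h
    convert h using 2 <;> push_cast <;> ring
  · rw [hio]
    rw [if_neg (by omega)] at h
    convert h using 2 <;> push_cast <;> ring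

lemma qBB_noUpper (hn : 2 ≤ n) (hε : 0 < ε) (hε2 : ε < 1/2) (h1i : 1 ≤ i) (hi : i < n)
    (hk : k % 2 = 0) : Cp (.B n ε) (qBB n ε i k) true = ∅ := by
  rw [Set.eq_empty_iff_forall_notMem]
  rintro ⟨j, c⟩ ⟨hXB, hor⟩
  rcases hor with ⟨r, hr1, hr2, hptι, hι0, hι1, hι2, hmin⟩ | ⟨hj, hspin⟩
  · rw [qBB_len] at hr2
    simp only [if_true] at hmin
    rcases Nat.lt_or_ge r (n + 1) with hrn | hrn
    · -- in the a-part
      rcases Nat.lt_or_ge r n with hrn' | hrn'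
      · -- increasing there, no local min
        have hy1 : (pt (qBB n ε i k) r).2 = ((k - (2 * (n : ℤ) - 2 * (i : ℤ) - 1) : ℤ) : ℝ) + 2 * n - 1 + 2 * r := by
          rw [qBB_pt_left (by omega), qBspin_pt (by omega), if_neg (by omega : ¬ r = n)]
        have hy0 : (pt (qBB n ε i k) (r - 1)).2 = ((k - (2 * (n : ℤ) - 2 * (i : ℤ) - 1) : ℤ) : ℝ) + 2 * n - 1 + 2 * ((r : ℝ) - 1) := by
          rw [qBB_pt_left (by omega), qBspin_pt (by omega), if_neg (by omega : ¬ r - 1 = n)]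
          simp only
          rw [natsub (by omega : 1 ≤ r)]
          norm_num
        rw [hy1, hy0] at hmin
        linarith [hmin.1]
      · -- r = n : x-coordinate 2n-1 is excluded
        have hrn'' : r = n := by omega
        have hx : (pt (qBB n ε i k) r).1 = 2 * (n : ℝ) - 1 := by
          rw [hrn'', qBB_pt_left (by omega : n < n + 1), qBspin_pt (by omega : n < n + 1),
            if_pos rfl]
        rw [hptι] at hx
        simp only at hx
        have : (iotaB n (j, c)).1 = 2 * (n : ℤ) - 1 := by exact_mod_cast hx
        exact hι1 this
    · -- in the b-part
      rcases Nat.eq_or_lt_of_le hrn with he | hlt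
      · -- r = n + 1 : x-coordinate 2n-1 again
        have hx : (pt (qBB n ε i k) r).1 = 2 * (n : ℝ) - 1 := by
          rw [← he, show n + 1 = 2 * n + 1 - n by omega, qBB_pt_right (le_refl n),
            qBb_pt (by omega : n < n + 1), if_pos rfl]
        rw [hptι] at hx
        simp only at hx
        have : (iotaB n (j, c)).1 = 2 * (n : ℤ) - 1 := by exact_mod_cast hx
        exact hι1 this
      · set s := 2 * n + 1 - r with hs
        have hs1 : 1 ≤ s := by omega
        have hsn : s ≤ n - 1 := by omega
        have hr' : r = 2 * n + 1 - s := by omega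
        have hrm : r - 1 = 2 * n + 1 - (s + 1) := by omega
        have hrp : r + 1 = 2 * n + 1 - (s - 1) := by omega
        have hys : (pt (qBB n ε i k) r).2 =
            ((k + (2 * (n : ℤ) - 2 * (i : ℤ) - 1) : ℤ) : ℝ) + 2 * n - 1 + 2 * min (s : ℝ) (2 * (i : ℝ) - s) := by
          rw [hr', qBB_pt_right (by omega), qBb_pt (by omega), if_neg (by omega : ¬ s = n)]
        rcases Nat.lt_or_ge s i with hsi | hsi
        · -- before the peak (in b's indexing) : neighbour s-1 is lower
          have hym : (pt (qBB n ε i k) (r + 1)).2 =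
              ((k + (2 * (n : ℤ) - 2 * (i : ℤ) - 1) : ℤ) : ℝ) + 2 * n - 1 + 2 * ((s : ℝ) - 1) := by
            rw [hrp, qBB_pt_right (by omega), qBb_pt (by omega), if_neg (by omega : ¬ s - 1 = n)]
            simp only
            rw [qBb_min_left (by omega : s - 1 ≤ i), natsub (by omega : 1 ≤ s)]
            norm_num
          rw [hys, qBb_min_left (by omega : s ≤ i)] at hmin
          rw [hym] at hmin
          linarith [hmin.2]
        · -- after the peak : neighbour s+1 is lower
          have hym : (pt (qBB n ε i k) (r - 1)).2 =
              (if s + 1 = n then ((k + (2 * (n : ℤ) - 2 * (i : ℤ) - 1) : ℤ) : ℝ) + 4 * i - ε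
               else ((k + (2 * (n : ℤ) - 2 * (i : ℤ) - 1) : ℤ) : ℝ) + 2 * n - 1 + 2 * (2 * (i : ℝ) - (s + 1))) := by
            rw [hrm, qBB_pt_right (by omega), qBb_pt (by omega)]
            by_cases hcase : s + 1 = n
            · rw [if_pos hcase, if_pos hcase]
            · rw [if_neg hcase, if_neg hcase, qBb_min_right (by omega : i ≤ s + 1)]
              simp only
              push_cast
              ring
          rw [hys, qBb_min_right hsi] at hmin
          rw [hym] at hmin
          have h2 := hmin.1
          split_ifs at h2 with hcase
          · -- s + 1 = n : value kb + 4i - ε < kb + 2n-1+2(2i - s) with s = n-1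
            have hsn' : (s : ℝ) = (n : ℝ) - 1 := by
              have : ((s : ℕ) : ℝ) = ((n - 1 : ℕ) : ℝ) := by exact_mod_cast (by omega : s = n - 1)
              rw [natsub (by omega : 1 ≤ n)] at this
              push_cast at this
              exact this
            rw [hsn'] at h2
            linarith
          · linarith
  · -- spin clause
    simp only [if_true] at hspin
    obtain ⟨hin, hnotin⟩ := hspin
    have hka_mem : qBspin n ε (k - (2 * (n : ℤ) - 2 * (i : ℤ) - 1)) ∈ pathsBspin n ε (k - (2 * (n : ℤ) - 2 * (i : ℤ) - 1)) := qBspin_mem hn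
    have hkb_mem : qBb n ε (k + (2 * (n : ℤ) - 2 * (i : ℤ) - 1)) i ∈ pathsBspin n ε (k + (2 * (n : ℤ) - 2 * (i : ℤ) - 1)) := qBb_mem hn hi
    have hva : (pt (qBspin n ε (k - (2 * (n : ℤ) - 2 * (i : ℤ) - 1))) n).2 = ((k - (2 * (n : ℤ) - 2 * (i : ℤ) - 1) : ℤ) : ℝ) + 4 * n - 2 + ε := by
      rw [qBspin_pt (by omega : n < n + 1), if_pos rfl]
    have hvb : (pt (qBb n ε (k + (2 * (n : ℤ) - 2 * (i : ℤ) - 1)) i) n).2 = ((k + (2 * (n : ℤ) - 2 * (i : ℤ) - 1) : ℤ) : ℝ) + 4 * i - ε := by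
      rw [qBb_pt (by omega : n < n + 1), if_pos rfl]
    have hLa : ((k - (2 * (n : ℤ) - 2 * (i : ℤ) - 1) : ℤ) : ℝ) + 4 * n - 2 = ((k + 2 * (n : ℤ) + 2 * (i : ℤ) - 1 : ℤ) : ℝ) := by
      push_cast; ring
    have hLb : ((k + (2 * (n : ℤ) - 2 * (i : ℤ) - 1) : ℤ) : ℝ) + 4 * i = ((k + 2 * (n : ℤ) + 2 * (i : ℤ) - 1 : ℤ) : ℝ) := by
      push_cast; ring
    set L := k + 2 * (n : ℤ) + 2 * (i : ℤ) - 1 with hL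
    rcases mem_append_cases hin with h | h
    · have hv := spin_mem_x hka_mem h rfl
      have h2 := congrArg Prod.snd hv
      simp only [hva] at h2
      rw [hLa] at h2
      -- c - ε = L + ε
      have h4 : (0 : ℝ) < ((c - L : ℤ) : ℝ) := by push_cast; push_cast at h2; linarith
      have h5 : ((c - L : ℤ) : ℝ) < 1 := by push_cast; push_cast at h2; linarith
      have h4' : (0 : ℤ) < c - L := by exact_mod_cast h4
      have h5' : (c - L : ℤ) < 1 := by exact_mod_cast h5
      omega
    · have hv := spin_mem_x hkb_mem h rfl
      have h2 := congrArg Prod.snd hv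
      simp only [hvb] at h2
      rw [hLb] at h2
      -- c - ε = L - ε, so c = L, but then (2n-1, L+ε) = top of a is in the path
      have hc : c = L := by
        have : (c : ℝ) = ((L : ℤ) : ℝ) := by linarith
        exact_mod_cast this
      apply hnotin
      rw [hc]
      have : ((L : ℤ) : ℝ) + ε = ((k - (2 * (n : ℤ) - 2 * (i : ℤ) - 1) : ℤ) : ℝ) + 4 * n - 2 + ε := by rw [hLa]
      rw [this, qBB]
      apply List.mem_append_left
      rw [mem_iff_pt]
      refine ⟨n, by rw [qBspin_len]; omega, ?_⟩
      rw [qBspin_pt (by omega : n < n + 1), if_pos rfl]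


lemma qBspin_y {n : ℕ} {ε : ℝ} {l : ℤ} {r : ℕ} (h : r < n) :
    (pt (qBspin n ε l) r).2 = (l : ℝ) + 2 * n - 1 + 2 * r := by
  rw [qBspin_pt (by omega), if_neg (by omega : ¬ r = n)]

lemma qBspin_y_n {n : ℕ} {ε : ℝ} {l : ℤ} :
    (pt (qBspin n ε l) n).2 = (l : ℝ) + 4 * n - 2 + ε := by
  rw [qBspin_pt (by omega : n < n + 1), if_pos rfl]

lemma qBb_y_left {n i : ℕ} {ε : ℝ} {l : ℤ} {r : ℕ} (h : r ≤ i) (hrn : r < n) :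
    (pt (qBb n ε l i) r).2 = (l : ℝ) + 2 * n - 1 + 2 * r := by
  rw [qBb_pt (by omega), if_neg (by omega : ¬ r = n)]
  simp only
  rw [qBb_min_left h]

lemma qBb_y_right {n i : ℕ} {ε : ℝ} {l : ℤ} {r : ℕ} (h : i ≤ r) (hrn : r < n) :
    (pt (qBb n ε l i) r).2 = (l : ℝ) + 2 * n - 1 + 2 * (2 * (i : ℝ) - r) := by
  rw [qBb_pt (by omega), if_neg (by omega : ¬ r = n)]
  simp only
  rw [qBb_min_right h]

lemma qBb_y_n {n i : ℕ} {ε : ℝ} {l : ℤ} : (pt (qBb n ε l i) n).2 = (l : ℝ) + 4 * i - ε := by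
  rw [qBb_pt (by omega : n < n + 1), if_pos rfl]

lemma noMin_left {n : ℕ} {ε : ℝ} {la : ℤ} (hn : 2 ≤ n) (hla : la % 2 = 1)
    {a c : List (ℝ × ℝ)} (ha : a ∈ pathsBspin n ε la)
    (hlen : n + 2 ≤ (a ++ c).length)
    (hC : Cp (.B n ε) (a ++ c) true = ∅) :
    ∀ s, 1 ≤ s → s ≤ n - 1 →
      ¬((pt a s).2 < (pt a (s - 1)).2 ∧ (pt a s).2 < (pt a (s + 1)).2) := by
  intro s h1 h2 hmin
  have e0 : pt (a ++ c) s = pt a s := pt_append_left (by rw [ha.1]; omega)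
  have e1 : pt (a ++ c) (s - 1) = pt a (s - 1) := pt_append_left (by rw [ha.1]; omega)
  have e2 : pt (a ++ c) (s + 1) = pt a (s + 1) := pt_append_left (by rw [ha.1]; omega)
  obtain ⟨jl, hjl⟩ := spin_corner hn ha hla h1 h2 h1 (by omega) e0
    (by rw [e0, e1]; exact hmin.1) (by rw [e0, e2]; exact hmin.2)
  rw [hC] at hjl
  exact hjl

lemma noMin_right {n : ℕ} {ε : ℝ} {lb : ℤ} (hn : 2 ≤ n) (hlb : lb % 2 = 1)
    {a b : List (ℝ × ℝ)} (haLen : a.length = n + 1) (hb : b ∈ pathsBspin n ε lb)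
    (hC : Cp (.B n ε) (a ++ b.reverse) true = ∅) :
    ∀ s, 1 ≤ s → s ≤ n - 1 →
      ¬((pt b s).2 < (pt b (s - 1)).2 ∧ (pt b s).2 < (pt b (s + 1)).2) := by
  intro s h1 h2 hmin
  have hlen : (a ++ b.reverse).length = 2 * n + 2 := by
    rw [List.length_append, List.length_reverse, haLen, hb.1]; omega
  have e0 : pt (a ++ b.reverse) (2 * n + 1 - s) = pt b s := pt_append_right haLen hb.1 (by omega)
  have e1 : pt (a ++ b.reverse) (2 * n + 1 - s - 1) = pt b (s + 1) := by
    rw [show 2 * n + 1 - s - 1 = 2 * n + 1 - (s + 1) by omega]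
    exact pt_append_right haLen hb.1 (by omega)
  have e2 : pt (a ++ b.reverse) (2 * n + 1 - s + 1) = pt b (s - 1) := by
    rw [show 2 * n + 1 - s + 1 = 2 * n + 1 - (s - 1) by omega]
    exact pt_append_right haLen hb.1 (by omega)
  obtain ⟨jl, hjl⟩ := spin_corner hn hb hlb h1 h2 (show 1 ≤ 2 * n + 1 - s by omega)
    (by omega) e0 (by rw [e0, e1]; exact hmin.2) (by rw [e0, e2]; exact hmin.1)
  rw [hC] at hjl
  exact hjl


lemma qBB_force_low {n i : ℕ} {ε : ℝ} {k : ℤ} (hn : 2 ≤ n) (hε : 0 < ε) (hε2 : ε < 1/2)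
    (h1i : 1 ≤ i) (hi : i < n) (hk : k % 2 = 0) {a b : List (ℝ × ℝ)}
    (ha : a ∈ pathsBspin n ε (k - (2 * (n : ℤ) - 2 * (i : ℤ) - 1)))
    (hb : b ∈ pathsBspin n ε (k + (2 * (n : ℤ) - 2 * (i : ℤ) - 1)))
    (hab : 0 < (pt a n).2 - (pt b n).2)
    (hlow : (((iotaB n (i, k + 4 * (n : ℤ) - 2)).1 : ℝ),
             ((iotaB n (i, k + 4 * (n : ℤ) - 2)).2 : ℝ)) ∈ a ++ b.reverse) :
    a = qBspin n ε (k - (2 * (n : ℤ) - 2 * (i : ℤ) - 1)) ∧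
    b = qBb n ε (k + (2 * (n : ℤ) - 2 * (i : ℤ) - 1)) i := by
  set KA := k - (2 * (n : ℤ) - 2 * (i : ℤ) - 1) with hKA
  set KB := k + (2 * (n : ℤ) - 2 * (i : ℤ) - 1) with hKB
  set L := k + 2 * (n : ℤ) + 2 * (i : ℤ) - 1 with hL
  have hKAL : (KA : ℝ) + 4 * n - 2 = (L : ℝ) := by rw [hKA, hL]; push_cast; ring
  have hKBL : (KB : ℝ) + 4 * i + 1 = (L : ℝ) + 1 := by rw [hKB, hL]; push_cast; ring
  -- step 1: the distinguished point lies on b, at index i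
  have hbi : (pt b i).2 = ((k + 4 * (n : ℤ) - 2 : ℤ) : ℝ) := by
    rcases mem_append_cases hlow with hA | hB
    · exfalso
      rw [mem_iff_pt] at hA
      obtain ⟨r, hr, hptr⟩ := hA
      rw [ha.1] at hr
      have hxr := congrArg Prod.fst hptr
      simp only at hxr
      rcases iota_low h1i hi hk with ⟨hio, h4⟩ | ⟨hio, h4⟩
      · rw [hio] at hxr
        simp only at hxr
        rcases Nat.lt_or_ge r n with hrn | hrn
        · rw [spin_x ha r hrn, if_neg (by rw [hKA]; omega)] at hxr
          push_cast at hxr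
          have : 4 * (n : ℤ) - 2 - 2 * r = 2 * i := by exact_mod_cast hxr
          omega
        · have hrn' : r = n := by omega
          rw [hrn', ha.2.2.1] at hxr
          push_cast at hxr
          have : 2 * (n : ℤ) - 1 = 2 * i := by exact_mod_cast hxr
          omega
      · rw [hio] at hxr
        simp only at hxr
        rcases Nat.lt_or_ge r n with hrn | hrn
        · rw [spin_x ha r hrn, if_pos (by rw [hKA]; omega)] at hxr
          push_cast at hxr
          have : 2 * (r : ℤ) = 4 * n - 2 - 2 * i := by exact_mod_cast hxr
          omega
        · have hrn' : r = n := by omega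
          rw [hrn', ha.2.2.1] at hxr
          push_cast at hxr
          have : 2 * (n : ℤ) - 1 = 4 * n - 2 - 2 * i := by exact_mod_cast hxr
          omega
    · rw [mem_iff_pt] at hB
      obtain ⟨r, hr, hptr⟩ := hB
      rw [hb.1] at hr
      have hxr := congrArg Prod.fst hptr
      have hyr := congrArg Prod.snd hptr
      simp only at hxr hyr
      have hri : r = i := by
        rcases Nat.lt_or_ge r n with hrn | hrn
        · rcases iota_low h1i hi hk with ⟨hio, h4⟩ | ⟨hio, h4⟩
          · rw [hio] at hxr
            simp only at hxr
            rw [spin_x hb r hrn, if_pos (by rw [hKB]; exact h4)] at hxr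
            push_cast at hxr
            have : 2 * (r : ℤ) = 2 * i := by exact_mod_cast hxr
            omega
          · rw [hio] at hxr
            simp only at hxr
            rw [spin_x hb r hrn, if_neg (by rw [hKB]; omega)] at hxr
            push_cast at hxr
            have : 4 * (n : ℤ) - 2 - 2 * (r : ℤ) = 4 * n - 2 - 2 * i := by exact_mod_cast hxr
            omega
        · exfalso
          have hrn' : r = n := by omega
          rw [hrn', hb.2.2.1] at hxr
          rcases iota_low h1i hi hk with ⟨hio, h4⟩ | ⟨hio, h4⟩ <;> rw [hio] at hxr <;>
            simp only at hxr <;> push_cast at hxr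
          · have : 2 * (n : ℤ) - 1 = 2 * i := by exact_mod_cast hxr
            omega
          · have : 2 * (n : ℤ) - 1 = 4 * n - 2 - 2 * i := by exact_mod_cast hxr
            omega
      rw [← hri]
      rw [hyr, iotaB_snd]
  -- step 2 : bounds
  have hAub : (pt a n).2 ≤ (L : ℝ) + ε := by
    have := spin_ymax hn hε ha
    rw [← hKAL]; linarith
  have hBlb : (L : ℝ) - ε ≤ (pt b n).2 := by
    have h1 : (pt b i).2 - 2 * ((n - 1 - i : ℕ) : ℝ) ≤ (pt b (n - 1)).2 :=
      spin_lip_dn hb (by omega) (by omega)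
    have hcst : ((n - 1 - i : ℕ) : ℝ) = (n : ℝ) - 1 - i := by
      rw [natsub (by omega : i ≤ n - 1), natsub (by omega : 1 ≤ n)]; norm_num
    rw [hcst, hbi] at h1
    have h2 : (pt b (n - 1)).2 - 1 - ε ≤ (pt b n).2 := by
      rcases hb.2.2.2.2.2 with h | h <;> linarith
    rw [hL]
    push_cast at h1 ⊢
    linarith
  -- step 3 : pin the top of a
  have htopa : (pt a n).2 = (L : ℝ) + ε := by
    obtain ⟨ca, hca, -⟩ := spin_int hn ha (n - 1) (le_refl _)
    rcases ha.2.2.2.2.2 with hlast | hlast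
    · have hA : (pt a n).2 = ((KA + 2 * (n : ℤ) - 1 + 2 * ca + 1 : ℤ) : ℝ) + ε := by
        push_cast at hca ⊢
        linarith
      set u := KA + 2 * (n : ℤ) - 1 + 2 * ca + 1 with hu
      have h1 : u ≤ L := by
        have : (u : ℝ) ≤ (L : ℝ) := by linarith [hAub, hA.symm.le]
        exact_mod_cast this
      have h2 : (L - 1 : ℤ) < u := by
        have : ((L - 1 : ℤ) : ℝ) < (u : ℝ) := by push_cast; linarith [hab, hBlb, hA.symm.le]
        exact_mod_cast this
      have : u = L := by omega
      rw [hA, this]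
    · exfalso
      have hA : (pt a n).2 = ((KA + 2 * (n : ℤ) - 1 + 2 * ca - 1 : ℤ) : ℝ) - ε := by
        push_cast at hca ⊢
        linarith
      set u := KA + 2 * (n : ℤ) - 1 + 2 * ca - 1 with hu
      have h1 : u ≤ L := by
        have : (u : ℝ) < ((L + 1 : ℤ) : ℝ) := by push_cast; linarith [hAub, hA.symm.le]
        have h' : u < L + 1 := by exact_mod_cast this
        omega
      have h2 : L < u := by
        have : ((L : ℤ) : ℝ) < (u : ℝ) := by linarith [hab, hBlb, hA.symm.le]
        exact_mod_cast this
      omega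
  have haq : a = qBspin n ε KA := by
    apply Bspin_force hn hε ha
    rw [mem_iff_pt]
    refine ⟨n, by rw [ha.1]; omega, Prod.ext ha.2.2.1 ?_⟩
    simp only
    rw [htopa, ← hKAL]
  -- step 5 : pin the bottom of b
  obtain ⟨cb, hcb, -⟩ := spin_int hn hb (n - 1) (le_refl _)
  have hbn : (pt b n).2 = (L : ℝ) - ε ∧ (pt b (n - 1)).2 = ((L + 1 : ℤ) : ℝ) := by
    rcases hb.2.2.2.2.2 with hlast | hlast
    · exfalso
      have hB : (pt b n).2 = ((KB + 2 * (n : ℤ) - 1 + 2 * cb + 1 : ℤ) : ℝ) + ε := by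
        push_cast at hcb ⊢
        linarith
      set v := KB + 2 * (n : ℤ) - 1 + 2 * cb + 1 with hv
      have h1 : v < L := by
        have : (v : ℝ) < (L : ℝ) := by linarith [hab, htopa, hB.symm.le]
        exact_mod_cast this
      have h2 : (L - 1 : ℤ) < v := by
        have : ((L - 1 : ℤ) : ℝ) < (v : ℝ) := by push_cast; linarith [hBlb, hB.symm.le]
        exact_mod_cast this
      omega
    · have hB : (pt b n).2 = ((KB + 2 * (n : ℤ) - 1 + 2 * cb - 1 : ℤ) : ℝ) - ε := by
        push_cast at hcb ⊢
        linarith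
      set v := KB + 2 * (n : ℤ) - 1 + 2 * cb - 1 with hv
      have h1 : v ≤ L := by
        have : (v : ℝ) < ((L + 1 : ℤ) : ℝ) := by push_cast; linarith [hab, htopa, hB.symm.le]
        have h' : v < L + 1 := by exact_mod_cast this
        omega
      have h2 : L ≤ v := by
        have : ((L - 1 : ℤ) : ℝ) < (v : ℝ) := by push_cast; linarith [hBlb, hB.symm.le]
        have h' : L - 1 < v := by exact_mod_cast this
        omega
      have hvL : v = L := by omega
      constructor
      · rw [hB, hvL]
      · have : (pt b (n - 1)).2 = (v : ℝ) + 1 := by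
          push_cast at hcb ⊢
          linarith
        rw [this, hvL]; push_cast; ring
  -- step 6 : all values of b
  have hbq : b = qBb n ε KB i := by
    apply spin_ext hn hb (qBb_mem hn hi)
    intro r hr
    have hbiv : (pt b i).2 = (KB : ℝ) + 2 * n - 1 + 2 * i := by
      rw [hbi, hKB]; push_cast; ring
    rcases Nat.lt_or_ge r n with hrn | hrn
    · rcases le_or_gt r i with hri | hri
      · -- squeeze on [0, i]
        have h1 : (pt b r).2 ≤ (pt b 0).2 + 2 * ((r - 0 : ℕ) : ℝ) :=
          spin_lip_up hb (by omega) (by omega)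
        have h2 : (pt b i).2 ≤ (pt b r).2 + 2 * ((i - r : ℕ) : ℝ) :=
          spin_lip_up hb hri (by omega)
        simp only [Nat.sub_zero] at h1
        rw [hb.2.2.2.1] at h1
        rw [natsub hri] at h2
        rw [qBb_y_left hri hrn, hbiv] at *
        linarith [h1, h2, hbiv]
      · -- squeeze on [i, n-1]
        have h1 : (pt b i).2 - 2 * ((r - i : ℕ) : ℝ) ≤ (pt b r).2 :=
          spin_lip_dn hb (by omega) (by omega)
        have h2 : (pt b r).2 - 2 * ((n - 1 - r : ℕ) : ℝ) ≤ (pt b (n - 1)).2 :=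
          spin_lip_dn hb (by omega) (by omega)
        rw [natsub (by omega : i ≤ r)] at h1
        rw [natsub (by omega : r ≤ n - 1), natsub (by omega : 1 ≤ n)] at h2
        rw [hbn.2] at h2
        rw [qBb_y_right (by omega) hrn]
        have hLKB : ((L + 1 : ℤ) : ℝ) = (KB : ℝ) + 4 * i + 1 := by
          rw [hKB, hL]; push_cast; ring
        rw [hLKB] at h2
        rw [hbiv] at h1
        push_cast at h1 h2 ⊢
        linarith
    · have : r = n := by omega
      rw [this, hbn.1, qBb_y_n]
      rw [hL, hKB]
      push_cast
      ring
  exact ⟨haq, hbq⟩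


lemma qBB_force_noUpper {n i : ℕ} {ε : ℝ} {k : ℤ} (hn : 2 ≤ n) (hε : 0 < ε) (hε2 : ε < 1/2)
    (h1i : 1 ≤ i) (hi : i < n) (hk : k % 2 = 0) {a b : List (ℝ × ℝ)}
    (ha : a ∈ pathsBspin n ε (k - (2 * (n : ℤ) - 2 * (i : ℤ) - 1)))
    (hb : b ∈ pathsBspin n ε (k + (2 * (n : ℤ) - 2 * (i : ℤ) - 1)))
    (hab : 0 < (pt a n).2 - (pt b n).2)
    (hC : Cp (.B n ε) (a ++ b.reverse) true = ∅) :
    a = qBspin n ε (k - (2 * (n : ℤ) - 2 * (i : ℤ) - 1)) ∧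
    b = qBb n ε (k + (2 * (n : ℤ) - 2 * (i : ℤ) - 1)) i := by
  classical
  set KA := k - (2 * (n : ℤ) - 2 * (i : ℤ) - 1) with hKA
  set KB := k + (2 * (n : ℤ) - 2 * (i : ℤ) - 1) with hKB
  set L := k + 2 * (n : ℤ) + 2 * (i : ℤ) - 1 with hL
  have hKA2 : KA % 2 = 1 := by rw [hKA]; omega
  have hKB2 : KB % 2 = 1 := by rw [hKB]; omega
  have hKAL : (KA : ℝ) + 4 * n - 2 = (L : ℝ) := by rw [hKA, hL]; push_cast; ring
  have hlen : (a ++ b.reverse).length = 2 * n + 2 := by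
    rw [List.length_append, List.length_reverse, ha.1, hb.1]; omega
  have hx2n : ∀ v ∈ a ++ b.reverse, v.1 = 2 * (n : ℝ) - 1 → v = pt a n ∨ v = pt b n := by
    intro v hv hx
    rcases mem_append_cases hv with h | h
    · exact Or.inl (spin_mem_x ha h hx)
    · exact Or.inr (spin_mem_x hb h hx)
  have hamem : pt a n ∈ a ++ b.reverse := by
    apply List.mem_append_left
    rw [mem_iff_pt]
    exact ⟨n, by rw [ha.1]; omega, rfl⟩
  have hbmem : pt b n ∈ a ++ b.reverse := by
    apply List.mem_append_right
    rw [List.mem_reverse, mem_iff_pt]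
    exact ⟨n, by rw [hb.1]; omega, rfl⟩
  have noMinA := noMin_left hn hKA2 ha (by omega) hC
  have noMinB := noMin_right hn hKB2 ha.1 hb hC
  -- step 1 : last step of a goes up
  obtain ⟨ca, hca, -⟩ := spin_int hn ha (n - 1) (le_refl _)
  have hupa : (pt a n).2 - (pt a (n - 1)).2 = 1 + ε := by
    rcases ha.2.2.2.2.2 with h | h
    · exact h
    · exfalso
      set co := KA + 2 * (n : ℤ) - 1 + 2 * ca - 1 with hco
      have hcood : co % 2 = 1 := by omega
      have hyan : (pt a n).2 = (co : ℝ) - ε := by rw [hco]; push_cast at hca ⊢; linarith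
      have hmem : ((n, co) : ℕ × ℤ) ∈ Cp (.B n ε) (a ++ b.reverse) true := by
        apply spinCorner_mem hcood
        · have : (2 * (n : ℝ) - 1, (co : ℝ) - ε) = pt a n :=
            (Prod.ext ha.2.2.1 (by simp only; rw [hyan])).symm
          rw [this]
          exact hamem
        · intro hmm
          rcases hx2n _ hmm rfl with hv | hv
          · have h2 := congrArg Prod.snd hv
            simp only at h2
            rw [hyan] at h2
            linarith
          · have h2 := congrArg Prod.snd hv
            simp only at h2
            rw [← h2, hyan] at hab
            linarith
      rw [hC] at hmem
      exact hmem
  -- step 2 : a is fully increasing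
  have havals := spin_noLocalMin_force hn ha (by linarith [hupa]) noMinA
  have htopa : (pt a n).2 = (L : ℝ) + ε := by
    have h1 := havals (n - 1) (le_refl _)
    rw [natsub (by omega : 1 ≤ n)] at h1
    push_cast at h1
    rw [← hKAL]
    linarith [hupa]
  have haq : a = qBspin n ε KA := by
    apply Bspin_force hn hε ha
    rw [mem_iff_pt]
    refine ⟨n, by rw [ha.1]; omega, Prod.ext ha.2.2.1 ?_⟩
    simp only
    rw [htopa, ← hKAL]
  -- step 3 : last step of b goes down
  obtain ⟨cb, hcb, -⟩ := spin_int hn hb (n - 1) (le_refl _)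
  have hdnb : (pt b n).2 - (pt b (n - 1)).2 = -(1 + ε) := by
    rcases hb.2.2.2.2.2 with h | h
    · exfalso
      have hbvals := spin_noLocalMin_force hn hb (by linarith [h]) noMinB
      have h1 := hbvals (n - 1) (le_refl _)
      rw [natsub (by omega : 1 ≤ n)] at h1
      push_cast at h1
      have hBv : (pt b n).2 = (KB : ℝ) + 4 * n - 2 + ε := by linarith [h]
      have hKBA : (KA : ℝ) < (KB : ℝ) := by
        have : KA < KB := by rw [hKA, hKB]; omega
        exact_mod_cast this
      rw [hBv, htopa, ← hKAL] at hab
      linarith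
    · exact h
  -- step 4 : pin the level of b's end
  have hbn1 : (pt b (n - 1)).2 = ((L + 1 : ℤ) : ℝ) := by
    set co := KB + 2 * (n : ℤ) - 1 + 2 * cb - 1 with hco
    have hcood : co % 2 = 1 := by omega
    have hybn : (pt b n).2 = (co : ℝ) - ε := by rw [hco]; push_cast at hcb ⊢; linarith [hdnb]
    by_cases hmm : (2 * (n : ℝ) - 1, (co : ℝ) + ε) ∈ a ++ b.reverse
    · rcases hx2n _ hmm rfl with hv | hv
      · have h2 := congrArg Prod.snd hv
        simp only at h2
        rw [htopa] at h2
        have hcoL : co = L := by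
          have : (co : ℝ) = (L : ℝ) := by linarith
          exact_mod_cast this
        have : (pt b (n - 1)).2 = (co : ℝ) + 1 := by rw [hco]; push_cast at hcb ⊢; linarith [hdnb]
        rw [this, hcoL]
        push_cast
        ring
      · exfalso
        have h2 := congrArg Prod.snd hv
        simp only at h2
        rw [hybn] at h2
        linarith
    · exfalso
      have hmem : ((n, co) : ℕ × ℤ) ∈ Cp (.B n ε) (a ++ b.reverse) true := by
        apply spinCorner_mem hcood
        · have : (2 * (n : ℝ) - 1, (co : ℝ) - ε) = pt b n :=
            (Prod.ext hb.2.2.1 (by simp only; rw [hybn])).symm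
          rw [this]
          exact hbmem
        · exact hmm
      rw [hC] at hmem
      exact hmem
  -- step 5 : shape of b
  have hbq : b = qBb n ε KB i := by
    have hy0 := hb.2.2.2.1
    have hstep := hb.2.2.2.2.1
    have hKBL1 : ((L + 1 : ℤ) : ℝ) = (KB : ℝ) + 4 * i + 1 := by
      rw [hKB, hL]; push_cast; ring
    have hvals : ∀ r, r ≤ n - 1 →
        (pt b r).2 = (pt (qBb n ε KB i) r).2 := by
      by_cases hT : ∃ r, r ≤ n - 2 ∧ (pt b (r + 1)).2 < (pt b r).2
      · set c₀ := Nat.find hT with hc₀def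
        obtain ⟨hc₀a, hc₀b⟩ := Nat.find_spec hT
        rw [← hc₀def] at hc₀a hc₀b
        -- all steps before c₀ go up
        have hupparts : ∀ r, r < c₀ → (pt b (r + 1)).2 = (pt b r).2 + 2 := by
          intro r hr
          have hnot := Nat.find_min hT hr
          rcases hstep r (by omega) with h | h
          · linarith
          · exact absurd ⟨by omega, by linarith⟩ hnot
        -- all steps from c₀ on go down
        have hdownparts : ∀ r, c₀ ≤ r → r ≤ n - 2 → (pt b (r + 1)).2 = (pt b r).2 - 2 := by
          intro r hr
          induction r, hr using Nat.le_induction with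
          | base =>
            intro h2
            rcases hstep c₀ (by omega) with h | h
            · linarith
            · linarith
          | succ r hr ih =>
            intro h2
            have hprev := ih (by omega)
            rcases hstep (r + 1) (by omega) with h | h
            · exfalso
              refine noMinB (r + 1) (by omega) (by omega) ⟨?_, by linarith⟩
              simp only [Nat.add_sub_cancel]
              linarith
            · linarith
        -- value at n-1 determines c₀ = i
        have hvc₀ : (pt b c₀).2 = (KB : ℝ) + 2 * n - 1 + 2 * c₀ := by
          have := chain_eq (fun r => (pt b r).2) 2 0 c₀ (by omega)
            (fun r h1 h2 => hupparts r h2)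
          have h' : (pt b c₀).2 = (pt b 0).2 + ((c₀ - 0 : ℕ) : ℝ) * 2 := this
          simp only [Nat.sub_zero] at h'
          rw [hy0] at h'
          rw [h']; ring
        have hvn1 : (pt b (n - 1)).2 = (pt b c₀).2 - 2 * ((n - 1 - c₀ : ℕ) : ℝ) := by
          have := chain_eq (fun r => (pt b r).2) (-2) c₀ (n - 1) (by omega)
            (fun r h1 h2 => by
              have := hdownparts r h1 (by omega)
              try simp only
              linarith)
          have h' : (pt b (n - 1)).2 = (pt b c₀).2 + ((n - 1 - c₀ : ℕ) : ℝ) * (-2) := this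
          rw [h']; ring
        have hc₀i : c₀ = i := by
          rw [hbn1, hKBL1, hvc₀, natsub (by omega : c₀ ≤ n - 1), natsub (by omega : 1 ≤ n)]
            at hvn1
          have : (c₀ : ℝ) = (i : ℝ) := by
            push_cast at hvn1
            linarith
          exact_mod_cast this
        subst hc₀i
        intro r hr
        rcases le_or_gt r c₀ with hri | hri
        · have := chain_eq (fun r => (pt b r).2) 2 0 r (by omega)
            (fun u h1 h2 => hupparts u (by omega))
          have h' : (pt b r).2 = (pt b 0).2 + ((r - 0 : ℕ) : ℝ) * 2 := this
          simp only [Nat.sub_zero] at h'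
          rw [hy0] at h'
          rw [h', qBb_y_left hri (by omega)]; ring
        · have := chain_eq (fun r => (pt b r).2) (-2) c₀ r (by omega)
            (fun u h1 h2 => by
              have := hdownparts u h1 (by omega)
              try simp only
              linarith)
          have h' : (pt b r).2 = (pt b c₀).2 + ((r - c₀ : ℕ) : ℝ) * (-2) := this
          rw [hvc₀, natsub (by omega : c₀ ≤ r)] at h'
          rw [h', qBb_y_right (by omega) (by omega)]
          ring
      · -- no down step at all : i = n - 1 and b is increasing
        push_neg at hT
        have hup : ∀ r, r ≤ n - 2 → (pt b (r + 1)).2 = (pt b r).2 + 2 := by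
          intro r hr
          rcases hstep r (by omega) with h | h
          · linarith
          · exfalso
            have := hT r hr
            linarith
        have hvals' : ∀ r, r ≤ n - 1 → (pt b r).2 = (KB : ℝ) + 2 * n - 1 + 2 * r := by
          intro r hr
          have := chain_eq (fun r => (pt b r).2) 2 0 r (by omega)
            (fun u h1 h2 => hup u (by omega))
          have h' : (pt b r).2 = (pt b 0).2 + ((r - 0 : ℕ) : ℝ) * 2 := this
          simp only [Nat.sub_zero] at h'
          rw [hy0] at h'
          rw [h']; ring
        have hieq : (i : ℝ) = (n : ℝ) - 1 := by
          have h1 := hvals' (n - 1) (le_refl _)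
          rw [hbn1, hKBL1, natsub (by omega : 1 ≤ n)] at h1
          push_cast at h1
          linarith
        intro r hr
        have hri : r ≤ i := by
          have : (r : ℝ) ≤ (n : ℝ) - 1 := by
            have h2 : ((r : ℕ) : ℝ) ≤ ((n - 1 : ℕ) : ℝ) := by exact_mod_cast hr
            rw [natsub (by omega : 1 ≤ n)] at h2
            push_cast at h2
            exact h2
          have : (r : ℝ) ≤ (i : ℝ) := by rw [hieq]; linarith
          exact_mod_cast this
        rw [hvals' r hr, qBb_y_left hri (by omega)]
    apply spin_ext hn hb (qBb_mem hn hi)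
    intro r hr
    rcases Nat.lt_or_ge r n with hrn | hrn
    · exact hvals r (by omega)
    · have hrn' : r = n := by omega
      rw [hrn', qBb_y_n]
      have h1 := hvals (n - 1) (le_refl _)
      rw [hbn1] at h1
      rw [hKBL1] at hbn1
      linarith [hdnb]
  exact ⟨haq, hbq⟩

end QBB

section TypeA
variable {n i : ℕ} {k : ℤ} {p : List (ℝ × ℝ)}

def qA (n i : ℕ) (k : ℤ) : List (ℝ × ℝ) :=
  (List.range (n + 2)).map fun r : ℕ =>
    ((r : ℝ), (i : ℝ) + (k : ℝ) + min (r : ℝ) (2 * ((n : ℝ) + 1 - (i : ℝ)) - (r : ℝ)))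

lemma qA_len : (qA n i k).length = n + 2 := by
  rw [qA, List.length_map, List.length_range]

lemma qA_pt {r : ℕ} (h : r < n + 2) :
    pt (qA n i k) r
      = ((r : ℝ), (i : ℝ) + (k : ℝ) + min (r : ℝ) (2 * ((n : ℝ) + 1 - (i : ℝ)) - (r : ℝ))) := by
  rw [qA]; exact pt_map_range h

lemma A_lip_up (hp : p ∈ pathsA n i k) {a b : ℕ} (hab : a ≤ b) (hb : b ≤ n + 1) :
    (pt p b).2 ≤ (pt p a).2 + ((b - a : ℕ) : ℝ) := by
  obtain ⟨_, _, _, _, hstep⟩ := hp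
  have := chain_le (fun r => (pt p r).2) 1 a b hab (fun r h1 h2 => by
    rcases hstep r (by omega) with h | h <;> (try simp only) <;> linarith)
  simpa using this

lemma A_lip_dn (hp : p ∈ pathsA n i k) {a b : ℕ} (hab : a ≤ b) (hb : b ≤ n + 1) :
    (pt p a).2 - ((b - a : ℕ) : ℝ) ≤ (pt p b).2 := by
  obtain ⟨_, _, _, _, hstep⟩ := hp
  have := chain_ge (fun r => (pt p r).2) 1 a b hab (fun r h1 h2 => by
    rcases hstep r (by omega) with h | h <;> (try simp only) <;> linarith)
  simpa using this

lemma A_int (hp : p ∈ pathsA n i k) : ∀ r, r ≤ n + 1 → ∃ c : ℤ, (pt p r).2 = (c : ℝ) := by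
  obtain ⟨_, _, hy0, _, hstep⟩ := hp
  intro r
  induction r with
  | zero => intro _; exact ⟨(i : ℤ) + k, by rw [hy0]; push_cast; ring⟩
  | succ r ih =>
    intro hr
    obtain ⟨c, hc⟩ := ih (by omega)
    rcases hstep r (by omega) with h | h
    · exact ⟨c + 1, by push_cast; linarith⟩
    · exact ⟨c - 1, by push_cast; linarith⟩

lemma A_force (hi : 1 ≤ i) (hin : i ≤ n) (hp : p ∈ pathsA n i k)
    (hpk : (pt p (n + 1 - i)).2 = (k : ℝ) + n + 1) : p = qA n i k := by
  have hlen := hp.1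
  have hx := hp.2.1
  have hy0 := hp.2.2.1
  have hyE := hp.2.2.2.1
  set t := n + 1 - i with ht
  have htc : (t : ℝ) = (n : ℝ) + 1 - i := by
    rw [ht]; push_cast [Nat.cast_sub (by omega : i ≤ n + 1)]; ring
  apply ext_pt (by rw [hlen, qA_len])
  intro r hr
  rw [hlen] at hr
  rw [qA_pt hr]
  have hx' := hx r hr
  have hy : (pt p r).2 = (i : ℝ) + k + min (r : ℝ) (2 * ((n : ℝ) + 1 - i) - r) := by
    rcases le_or_gt r t with hrt | hrt
    · have hmin : min (r : ℝ) (2 * ((n : ℝ) + 1 - i) - r) = r := by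
        apply min_eq_left
        have : ((r : ℕ) : ℝ) ≤ ((t : ℕ) : ℝ) := by exact_mod_cast hrt
        rw [htc] at this; linarith
      rw [hmin]
      have h1 : (pt p r).2 ≤ (pt p 0).2 + ((r - 0 : ℕ) : ℝ) :=
        A_lip_up hp (by omega) (by omega)
      have h2 : (pt p t).2 ≤ (pt p r).2 + ((t - r : ℕ) : ℝ) :=
        A_lip_up hp hrt (by omega)
      rw [Nat.cast_sub hrt] at h2
      simp only [Nat.sub_zero] at h1
      rw [hy0] at h1; rw [hpk] at h2
      have := htc; linarith
    · have hmin : min (r : ℝ) (2 * ((n : ℝ) + 1 - i) - r) = 2 * ((n : ℝ) + 1 - i) - r := by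
        apply min_eq_right
        have : ((t : ℕ) : ℝ) ≤ ((r : ℕ) : ℝ) := by exact_mod_cast hrt.le
        rw [htc] at this; linarith
      rw [hmin]
      have h1 : (pt p r).2 - ((n + 1 - r : ℕ) : ℝ) ≤ (pt p (n + 1)).2 :=
        A_lip_dn hp (by omega) (by omega)
      have h2 : (pt p t).2 - ((r - t : ℕ) : ℝ) ≤ (pt p r).2 :=
        A_lip_dn hp hrt.le (by omega)
      rw [Nat.cast_sub hrt.le] at h2
      rw [Nat.cast_sub (by omega : r ≤ n + 1)] at h1
      rw [hyE] at h1; rw [hpk] at h2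
      have := htc; push_cast at h1 h2 ⊢; linarith
  exact Prod.ext hx' hy

lemma qA_mem (hi : 1 ≤ i) (hin : i ≤ n) : qA n i k ∈ pathsA n i k := by
  have hC : (2 : ℝ) ≤ 2 * ((n : ℝ) + 1 - i) := by
    have : ((i : ℕ) : ℝ) ≤ ((n : ℕ) : ℝ) := by exact_mod_cast hin
    linarith
  refine ⟨qA_len, fun r hr => by rw [qA_pt hr], ?_, ?_, ?_⟩
  · rw [qA_pt (by omega)]
    simp only
    rw [min_eq_left (by push_cast; linarith)]
    push_cast; ring
  · rw [qA_pt (by omega)]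
    simp only
    have : min ((n : ℝ) + 1) (2 * ((n : ℝ) + 1 - i) - (n + 1)) = 2 * ((n : ℝ) + 1 - i) - (n + 1) := by
      apply min_eq_right
      have : ((i : ℕ) : ℝ) ≥ 1 := by exact_mod_cast hi
      push_cast; linarith
    push_cast at this ⊢
    rw [this]; ring
  · intro r hr
    rw [qA_pt (by omega : r + 1 < n + 2), qA_pt (by omega : r < n + 2)]
    simp only
    rcases le_or_gt (r + 1) (n + 1 - i) with hrt | hrt
    · left
      have hr1 : ((r : ℝ) + 1) ≤ 2 * ((n : ℝ) + 1 - i) - (r + 1) := by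
        have : ((r + 1 : ℕ) : ℝ) ≤ ((n + 1 - i : ℕ) : ℝ) := by exact_mod_cast hrt
        push_cast [Nat.cast_sub (by omega : i ≤ n + 1)] at this
        linarith
      rw [min_eq_left (by push_cast; linarith), min_eq_left (by linarith)]
      push_cast; ring
    · right
      have hr1 : 2 * ((n : ℝ) + 1 - i) - r ≤ (r : ℝ) := by
        have : ((n + 1 - i : ℕ) : ℝ) ≤ ((r : ℕ) : ℝ) := by exact_mod_cast (by omega : n + 1 - i ≤ r)
        push_cast [Nat.cast_sub (by omega : i ≤ n + 1)] at this
        linarith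
      rw [min_eq_right (by push_cast; linarith), min_eq_right (by linarith)]
      push_cast; ring

lemma qA_low (hi : 1 ≤ i) (hin : i ≤ n) :
    ((n : ℝ) + 1 - (i : ℝ), (k : ℝ) + (n : ℝ) + 1) ∈ qA n i k := by
  rw [mem_iff_pt]
  refine ⟨n + 1 - i, by rw [qA_len]; omega, ?_⟩
  rw [qA_pt (by omega)]
  have htc : ((n + 1 - i : ℕ) : ℝ) = (n : ℝ) + 1 - i := by
    push_cast [Nat.cast_sub (by omega : i ≤ n + 1)]; ring
  simp only [htc]
  have h2 : 2 * ((n : ℝ) + 1 - i) - ((n : ℝ) + 1 - i) = (n : ℝ) + 1 - i := by ring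
  rw [h2, min_self]
  have : ((i : ℕ) : ℝ) ≤ ((n : ℕ) : ℝ) := by exact_mod_cast hin
  ext <;> simp <;> ring

lemma qA_noUpper (hi : 1 ≤ i) (hin : i ≤ n) : CpA n (qA n i k) true = ∅ := by
  rw [Set.eq_empty_iff_forall_notMem]
  rintro ⟨j, l⟩ ⟨hj1, hjn, hptj, hjm, hjp⟩
  simp only at hptj hjm hjp
  rw [qA_pt (by omega : j < n + 2)] at hptj
  rw [qA_pt (by omega : j - 1 < n + 2)] at hjm
  rw [qA_pt (by omega : j + 1 < n + 2)] at hjp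
  have hyj : (i : ℝ) + k + min (j : ℝ) (2 * ((n : ℝ) + 1 - i) - j) = (l : ℝ) := by
    have := congrArg Prod.snd hptj; simpa using this
  simp only at hjm hjp
  set C := 2 * ((n : ℝ) + 1 - i) with hCdef
  have hjm' : min ((j : ℝ) - 1) (C - ((j : ℝ) - 1)) = min (j : ℝ) (C - j) + 1 := by
    have hc : ((j - 1 : ℕ) : ℝ) = (j : ℝ) - 1 := by
      push_cast [Nat.cast_sub hj1]; ring
    rw [hc] at hjm
    simp only [if_pos] at hjm hjp
    linarith [hjm, hyj]
  have hjp' : min ((j : ℝ) + 1) (C - ((j : ℝ) + 1)) = min (j : ℝ) (C - j) + 1 := by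
    simp only [if_pos] at hjp
    push_cast at hjp
    linarith [hjp, hyj]
  have h1 : min (j : ℝ) (C - j) + 1 ≤ (j : ℝ) - 1 := hjm' ▸ min_le_left _ _
  have h2 : min (j : ℝ) (C - j) + 1 ≤ C - ((j : ℝ) + 1) := hjp' ▸ min_le_right _ _
  have h3 : min (j : ℝ) (C - j) = C - j := by
    rcases min_cases (j : ℝ) (C - j) with ⟨h, _⟩ | ⟨h, _⟩
    · linarith
    · exact h
  rw [h3] at h2; linarith

lemma A_noUpper_peak (hi : 1 ≤ i) (hin : i ≤ n) (hp : p ∈ pathsA n i k)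
    (hC : CpA n p true = ∅) : (pt p (n + 1 - i)).2 = (k : ℝ) + n + 1 := by
  classical
  have hy0 := hp.2.2.1
  have hyE := hp.2.2.2.1
  have hx := hp.2.1
  have hstep := hp.2.2.2.2
  set t := n + 1 - i with ht
  have htc : (t : ℝ) = (n : ℝ) + 1 - i := by
    rw [ht]; push_cast [Nat.cast_sub (by omega : i ≤ n + 1)]; ring
  by_contra hne
  have hub : (pt p t).2 ≤ (pt p 0).2 + ((t - 0 : ℕ) : ℝ) := A_lip_up hp (by omega) (by omega)
  simp only [Nat.sub_zero] at hub
  rw [hy0, htc] at hub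
  have hlt : (pt p t).2 < (k : ℝ) + n + 1 := lt_of_le_of_ne (by linarith) hne
  -- there is a down-step before t
  have hdown : ∃ r, r < t ∧ (pt p (r + 1)).2 - (pt p r).2 = -1 := by
    by_contra hall
    push_neg at hall
    have hch := chain_ge (fun r => (pt p r).2) (-1) 0 t (by omega) (fun r h1 h2 => by
      rcases hstep r (by omega) with h | h
      · (try simp only); linarith
      · exact absurd h (hall r h2))
    have hch' : (pt p 0).2 - ((t - 0 : ℕ) : ℝ) * (-1) ≤ (pt p t).2 := hch
    simp only [Nat.sub_zero] at hch'
    rw [hy0, htc] at hch'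
    linarith
  -- there is an up-step in [t, n]
  have hup : ∃ r, t ≤ r ∧ r ≤ n ∧ (pt p (r + 1)).2 - (pt p r).2 = 1 := by
    by_contra hall
    push_neg at hall
    have hch := chain_le (fun r => (pt p r).2) (-1) t (n + 1) (by omega) (fun r h1 h2 => by
      rcases hstep r (by omega) with h | h
      · exact absurd h (hall r h1 (by omega))
      · (try simp only); linarith)
    have hch' : (pt p (n + 1)).2 ≤ (pt p t).2 + ((n + 1 - t : ℕ) : ℝ) * (-1) := hch
    have hnt : ((n + 1 - t : ℕ) : ℝ) = (i : ℝ) := by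
      have : n + 1 - t = i := by omega
      rw [this]
    rw [hnt, hyE] at hch'
    linarith
  obtain ⟨r₀, hr₀t, hr₀⟩ := hdown
  obtain ⟨ru, hrut, hrun, hru⟩ := hup
  have hQ : ∃ r, r ≤ n ∧ r₀ ≤ r ∧ (pt p (r + 1)).2 - (pt p r).2 = 1 :=
    ⟨ru, hrun, by omega, hru⟩
  set r₁ := Nat.find hQ with hr₁def
  obtain ⟨hr₁n, hr₀r₁, hr₁up⟩ := Nat.find_spec hQ
  rw [← hr₁def] at hr₁n hr₀r₁ hr₁up
  have hr₁ne : r₁ ≠ r₀ := by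
    intro h
    rw [h] at hr₁up
    linarith [hr₀, hr₁up]
  have hr₁pos : r₀ + 1 ≤ r₁ := by
    rcases Nat.lt_or_ge r₁ (r₀ + 1) with h | h
    · exact absurd (by omega : r₁ ≤ r₀) (by omega)
    · exact h
  have hprev : (pt p (r₁ - 1 + 1)).2 - (pt p (r₁ - 1)).2 = -1 := by
    have hnot := Nat.find_min hQ (show r₁ - 1 < r₁ by omega)
    rcases hstep (r₁ - 1) (by omega) with h | h
    · exact absurd ⟨by omega, by omega, h⟩ hnot
    · exact h
  have hr1 : r₁ - 1 + 1 = r₁ := by omega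
  rw [hr1] at hprev
  obtain ⟨c, hc⟩ := A_int hp r₁ (by omega)
  have hmem : ((r₁, c) : ℕ × ℤ) ∈ CpA n p true := by
    refine ⟨by omega, by omega, Prod.ext (hx r₁ (by omega)) hc, ?_, ?_⟩
    · rw [hc] at hprev; norm_num; linarith
    · rw [hc] at hr₁up; norm_num; linarith
  rw [hC] at hmem
  exact hmem

lemma A_low_peak (hi : 1 ≤ i) (hin : i ≤ n) (hp : p ∈ pathsA n i k)
    (hlow : ((n : ℝ) + 1 - (i : ℝ), (k : ℝ) + (n : ℝ) + 1) ∈ p) :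
    (pt p (n + 1 - i)).2 = (k : ℝ) + n + 1 := by
  rw [mem_iff_pt] at hlow
  obtain ⟨r, hr, hpt⟩ := hlow
  rw [hp.1] at hr
  have hx := hp.2.1 r hr
  have h1 : (r : ℝ) = (n : ℝ) + 1 - i := by
    rw [← hx, hpt]
  have hrt : r = n + 1 - i := by
    have : (r : ℝ) = ((n + 1 - i : ℕ) : ℝ) := by
      rw [h1]; push_cast [Nat.cast_sub (by omega : i ≤ n + 1)]; ring
    exact_mod_cast this
  rw [← hrt]
  rw [hpt]

end TypeA

/-- For each `(i,k) ∈ X` there exists exactly one path in `𝒫_{i,k}` with no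
upper corners (the lowest path `p⁻_{i,k}`); moreover a path of `𝒫_{i,k}` has no upper
corners iff it contains the distinguished point (`(N+1-i, k+N+1)` in type A;
`ι(i, k+4N-2)` in type B when `i < N`; `(2N-1, k+4N-2+ε)` in type B when `i = N`) — hence
`p⁻_{i,k}` is also the unique path containing that point. -/
theorem stmt1 (S : Setting) (hS : S.valid) (i : ℕ) (k : ℤ) (hik : (i, k) ∈ X S) :
    (∃! p, p ∈ P S i k ∧ Cp S p true = ∅) ∧
    (∀ p ∈ P S i k, (Cp S p true = ∅ ↔ lowPoint S i k ∈ p)) := by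
  cases S with
  | A n =>
    have hn : 1 ≤ n := hS
    obtain ⟨hi1, hin, -⟩ : 1 ≤ i ∧ i ≤ n ∧ ((i : ℤ) - k) % 2 = 1 := hik
    have hCp : ∀ p : List (ℝ × ℝ), Cp (.A n) p true = CpA n p true := fun _ => rfl
    have hP : P (.A n) i k = pathsA n i k := rfl
    have hlowP : lowPoint (.A n) i k = ((n : ℝ) + 1 - (i : ℝ), (k : ℝ) + (n : ℝ) + 1) := rfl
    constructor
    · refine ⟨qA n i k, ⟨qA_mem hi1 hin, by rw [hCp]; exact qA_noUpper hi1 hin⟩, ?_⟩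
      rintro p ⟨hp, hcp⟩
      rw [hCp] at hcp
      exact A_force hi1 hin hp (A_noUpper_peak hi1 hin hp hcp)
    · intro p hp
      rw [hCp, hlowP]
      constructor
      · intro hcp
        have hpk := A_noUpper_peak hi1 hin hp hcp
        rw [mem_iff_pt]
        refine ⟨n + 1 - i, by rw [hp.1]; omega, Prod.ext ?_ hpk⟩
        rw [hp.2.1 (n + 1 - i) (by omega)]
        simp only
        rw [natsub (by omega : i ≤ n + 1)]
        push_cast
        ring
      · intro hlow
        rw [A_force hi1 hin hp (A_low_peak hi1 hin hp hlow)]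
        exact qA_noUpper hi1 hin
  | B n ε =>
    obtain ⟨hn, hε, hε2⟩ := hS
    have hikB : ((i, k).1 = n ∧ (i, k).2 % 2 = 1) ∨
        (1 ≤ (i, k).1 ∧ (i, k).1 < n ∧ (i, k).2 % 2 = 0) := hik
    rcases hikB with ⟨hin', hk⟩ | ⟨h1i, hilt, hk⟩
    · -- spin case i = n
      simp only at hin' hk
      subst hin'
      have hP : P (.B i ε) i k = pathsBspin i ε k := by
        show pathsB i ε i k = _
        rw [pathsB, if_pos rfl]
      have hlowP : lowPoint (.B i ε) i k = (2 * (i : ℝ) - 1, (k : ℝ) + 4 * i - 2 + ε) := by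
        show (if i = i then _ else _) = _
        rw [if_pos rfl]
      rw [hP, hlowP]
      constructor
      · exact ⟨qBspin i ε k, ⟨qBspin_mem hn, Bspin_noUpper hn hε hε2 hk⟩,
          fun p ⟨hp, hcp⟩ => Bspin_noUpper_force hn hε hε2 hk hp hcp⟩
      · intro p hp
        constructor
        · intro hcp
          rw [Bspin_noUpper_force hn hε hε2 hk hp hcp]
          exact qBspin_low
        · intro hlow
          rw [Bspin_force hn hε hp hlow]
          exact Bspin_noUpper hn hε hε2 hk
    · -- case i < n
      simp only at h1i hilt hk
      have hine : ¬ i = n := by omega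
      have hP : P (.B n ε) i k = pathsB n ε i k := rfl
      have hlowP : lowPoint (.B n ε) i k =
          (((iotaB n (i, k + 4 * (n : ℤ) - 2)).1 : ℝ),
           ((iotaB n (i, k + 4 * (n : ℤ) - 2)).2 : ℝ)) := by
        show (if i = n then _ else _) = _
        rw [if_neg hine]
      rw [hP, hlowP]
      have hunf : pathsB n ε i k = {p | ∃ a b : List (ℝ × ℝ),
          a ∈ pathsBspin n ε (k - (2 * (n : ℤ) - 2 * (i : ℤ) - 1)) ∧
          b ∈ pathsBspin n ε (k + (2 * (n : ℤ) - 2 * (i : ℤ) - 1)) ∧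
          p = a ++ b.reverse ∧
          (pt a n).1 = (pt b n).1 ∧ 0 < (pt a n).2 - (pt b n).2} := by
        rw [pathsB, if_neg hine]
      rw [hunf]
      constructor
      · refine ⟨qBB n ε i k, ⟨?_, qBB_noUpper hn hε hε2 h1i hilt hk⟩, ?_⟩
        · have := qBB_mem (k := k) hn hε hilt
          rw [pathsB, if_neg hine] at this
          exact this
        · rintro p ⟨⟨a, b, ha, hb, rfl, hxab, hab⟩, hcp⟩
          obtain ⟨haq, hbq⟩ := qBB_force_noUpper hn hε hε2 h1i hilt hk ha hb hab hcp
          rw [haq, hbq]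
          rfl
      · rintro p ⟨a, b, ha, hb, rfl, hxab, hab⟩
        constructor
        · intro hcp
          obtain ⟨haq, hbq⟩ := qBB_force_noUpper hn hε hε2 h1i hilt hk ha hb hab hcp
          rw [haq, hbq]
          exact qBB_low h1i hilt hk
        · intro hlow
          obtain ⟨haq, hbq⟩ := qBB_force_low hn hε hε2 h1i hilt hk ha hb hab hlow
          rw [haq, hbq]
          exact qBB_noUpper hn hε hε2 h1i hilt hk

end Paper
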